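/- arXiv:0706.0223 — 7 statements merged into one kernel-verified Lean document; each statement's English description precedes it below -/
import Mathlib

section
/- There exists a universal constant c > 0 such that for every real ε with 0 < ε < 1/4 and every sequence (n_j)_{j≥1} of positive integers satisfying n_{j+1} ≥ (1+ε)·n_j for all j ≥ 1, the chromatic number of the distance graph G(S) with S = {n_j : j ≥ 1} is at most 1 + c⁻¹·ε⁻¹·|log ε|. -/
def distGraph (S : Set ℕ) : SimpleGraph ℤ where
  Adj x y := x ≠ y ∧ (x - y).natAbs ∈ S
  symm := by
    constructor
    intro x y h
    refine ⟨h.1.symm, ?_⟩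
    have : (y - x).natAbs = (x - y).natAbs := by
      rw [← Int.natAbs_neg, neg_sub]
    rw [this]
    exact h.2
  loopless := by
    constructor
    intro x h
    exact h.1 rfl


open Finset in
/-- `lacTouch N Q δ i k` : the level-`i` cell `[k/Q^i, (k+1)/Q^i]` meets the open
`δ/N`-neighborhood of some rational `p/N`. -/
def lacTouch (N Q : ℕ) (δ : ℝ) (i : ℕ) (k : ℤ) : Prop :=
  ∃ p : ℤ, ((p : ℝ) - δ) / N < ((k : ℝ) + 1) / (Q : ℝ) ^ i ∧
    (k : ℝ) / (Q : ℝ) ^ i < ((p : ℝ) + δ) / N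

/-- `lacWind n Q i j` : the frequency `n j` belongs to the `i`-th window `[Q^(i-1), Q^i)`. -/
def lacWind (n : ℕ → ℕ) (Q : ℕ) (i j : ℕ) : Prop :=
  1 ≤ j ∧ (Q : ℝ) ^ i ≤ Q * n j ∧ (n j : ℝ) < (Q : ℝ) ^ i

open Classical in
/-- The nested families of surviving grid cells. -/
noncomputable def lacFam (n : ℕ → ℕ) (Q : ℕ) (δ : ℝ) : ℕ → Finset ℤ
  | 0 => {0}
  | i + 1 =>
    ((lacFam n Q δ i).biUnion fun k => Finset.Icc (k * (Q : ℤ)) (k * Q + Q - 1)).filter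
      fun k => ∀ j : ℕ, lacWind n Q i j → ¬ lacTouch (n j) Q δ (i + 1) k

section lemmas

variable {n : ℕ → ℕ} {Q : ℕ} {δ : ℝ}

lemma lacFam_zero : lacFam n Q δ 0 = {0} := rfl

open Classical in
lemma lacFam_succ (i : ℕ) :
    lacFam n Q δ (i + 1) =
    ((lacFam n Q δ i).biUnion fun k => Finset.Icc (k * (Q : ℤ)) (k * Q + Q - 1)).filter
      fun k => ∀ j : ℕ, lacWind n Q i j → ¬ lacTouch (n j) Q δ (i + 1) k := by
  rw [lacFam]

lemma exists_parent {i : ℕ} {k : ℤ} (hk : k ∈ lacFam n Q δ (i + 1)) :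
    ∃ k' ∈ lacFam n Q δ i, k' * Q ≤ k ∧ k < (k' + 1) * Q := by
  classical
  rw [lacFam_succ] at hk
  obtain ⟨hk1, -⟩ := Finset.mem_filter.mp hk
  obtain ⟨k', hk', hmem⟩ := Finset.mem_biUnion.mp hk1
  obtain ⟨h1, h2⟩ := Finset.mem_Icc.mp hmem
  exact ⟨k', hk', h1, by linarith [h2]⟩

lemma not_touch {i : ℕ} {k : ℤ} (hk : k ∈ lacFam n Q δ (i + 1)) {j : ℕ}
    (hw : lacWind n Q i j) : ¬ lacTouch (n j) Q δ (i + 1) k := by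
  classical
  rw [lacFam_succ] at hk
  exact (Finset.mem_filter.mp hk).2 j hw

lemma mem_range (hQ : 1 ≤ Q) {i : ℕ} {k : ℤ} (hk : k ∈ lacFam n Q δ i) :
    0 ≤ k ∧ k < (Q : ℤ) ^ i := by
  induction i generalizing k with
  | zero => simp [lacFam_zero] at hk; simp [hk]
  | succ i ih =>
    obtain ⟨k', hk', h1, h2⟩ := exists_parent hk
    obtain ⟨g1, g2⟩ := ih hk'
    have hQ' : (1 : ℤ) ≤ (Q : ℤ) := by exact_mod_cast hQ
    constructor
    · nlinarith
    · calc k < (k' + 1) * Q := h2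
        _ ≤ (Q : ℤ) ^ i * Q := by nlinarith
        _ = (Q : ℤ) ^ (i + 1) := by ring

lemma exists_ancestor {d i : ℕ} {k : ℤ} (hk : k ∈ lacFam n Q δ (i + d)) (hQ : 1 ≤ Q) :
    ∃ a ∈ lacFam n Q δ i, a * (Q : ℤ) ^ d ≤ k ∧ k < (a + 1) * (Q : ℤ) ^ d := by
  induction d generalizing k with
  | zero => exact ⟨k, hk, by simp, by simp⟩
  | succ d ih =>
    have hk2 : k ∈ lacFam n Q δ ((i + d) + 1) := by rwa [Nat.add_succ] at hk
    obtain ⟨k', hk', h1, h2⟩ := exists_parent hk2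
    obtain ⟨a, ha, g1, g2⟩ := ih hk'
    have hQ' : (0 : ℤ) < (Q : ℤ) := by exact_mod_cast hQ
    refine ⟨a, ha, ?_, ?_⟩
    · calc a * (Q:ℤ) ^ (d+1) = (a * (Q:ℤ) ^ d) * Q := by ring
        _ ≤ k' * Q := by nlinarith
        _ ≤ k := h1
    · calc k < (k' + 1) * Q := h2
        _ ≤ ((a + 1) * (Q:ℤ) ^ d) * Q := by nlinarith
        _ = (a + 1) * (Q:ℤ) ^ (d + 1) := by ring

open Finset in
lemma card_children (hQ : 1 ≤ Q) (s : Finset ℤ) :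
    ((s.biUnion fun k => Finset.Icc (k * (Q : ℤ)) (k * Q + Q - 1)).card) = Q * s.card := by
  classical
  rw [Finset.card_biUnion]
  · have : ∀ k : ℤ, (Finset.Icc (k * (Q : ℤ)) (k * Q + Q - 1)).card = Q := by
      intro k
      rw [Int.card_Icc]
      simp only [show k * (Q:ℤ) + Q - 1 + 1 - k * Q = (Q : ℤ) by ring]
      exact Int.toNat_natCast Q
    simp [this, mul_comm]
  · intro x hx y hy hxy
    have hQ' : (0 : ℤ) < (Q : ℤ) := by exact_mod_cast hQ
    apply Finset.disjoint_left.mpr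
    intro a ha ha'
    obtain ⟨u1, u2⟩ := Finset.mem_Icc.mp ha
    obtain ⟨v1, v2⟩ := Finset.mem_Icc.mp ha'
    rcases lt_trichotomy x y with h | h | h
    · have : (x + 1) * Q ≤ y * Q := by nlinarith
      nlinarith
    · exact hxy h
    · have : (y + 1) * Q ≤ x * Q := by nlinarith
      nlinarith

end lemmas

section counting2
open scoped Classical

lemma card_Icc_le_real (a b : ℤ) {c : ℝ} (h : (b : ℝ) - a + 1 ≤ c) (hc : 0 ≤ c) :
    ((Finset.Icc a b).card : ℝ) ≤ c := by
  rw [Int.card_Icc]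
  rcases le_or_gt (b + 1 - a) 0 with h0 | h0
  · rw [Int.toNat_of_nonpos h0]; simpa using hc
  · have he : (((b + 1 - a).toNat : ℕ) : ℝ) = (b : ℝ) + 1 - a := by
      have := Int.toNat_of_nonneg h0.le
      exact_mod_cast congrArg (Int.cast : ℤ → ℝ) this
    rw [he]; linarith


open Finset in
set_option maxHeartbeats 1000000 in
lemma local_count {Q N : ℕ} {δ : ℝ} (hQ : 2 ≤ Q) (hδ0 : 0 < δ) (hδ1 : δ ≤ 1/2)
    (hN1 : 1 ≤ N) (i : ℕ) (hNlow : (Q : ℝ) ^ (i + 1) ≤ Q * N)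
    (hNhigh : (N : ℝ) < (Q : ℝ) ^ (i + 1)) (g : ℤ) :
    (((Finset.Icc (g * (Q:ℤ) * Q) (g * Q * Q + Q * Q - 1)).filter
      (fun k => lacTouch N Q δ (i + 2) k)).card : ℝ) ≤ 6 * δ * Q ^ 2 + 2 * Q + 4 := by
  classical
  have hQR : (2 : ℝ) ≤ (Q : ℝ) := by exact_mod_cast hQ
  have hQ0 : (0 : ℝ) < (Q : ℝ) := by linarith
  set h : ℝ := (Q : ℝ) ^ (i + 2) with hh
  have hh0 : 0 < h := pow_pos hQ0 _
  have hN0 : (0 : ℝ) < (N : ℝ) := by exact_mod_cast hN1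
  -- bounds  h / Q^2 ≤ N < h / Q
  have hNlow' : h ≤ (Q:ℝ)^2 * N := by
    have : h = (Q:ℝ) ^ (i+1) * Q := by rw [hh]; ring
    rw [this]; nlinarith [hNlow]
  have hNhigh' : (N : ℝ) * Q < h := by
    have : h = (Q:ℝ) ^ (i+1) * Q := by rw [hh]; ring
    rw [this]; nlinarith [hNhigh]
  clear_value h
  set pmin : ℤ := ⌈(N : ℝ) * (g * Q * Q) / h - δ⌉ with hpmin
  set pmax : ℤ := ⌊(N : ℝ) * (g * Q * Q + Q * Q) / h + δ⌋ with hpmax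
  set kmin : ℤ → ℤ := fun p => ⌈((p : ℝ) - δ) * h / N - 1⌉ with hkmin
  set kmax : ℤ → ℤ := fun p => ⌊((p : ℝ) + δ) * h / N⌋ with hkmax
  have hsub : (Finset.Icc (g * (Q:ℤ) * Q) (g * Q * Q + Q * Q - 1)).filter
      (fun k => lacTouch N Q δ (i + 2) k) ⊆
      (Finset.Icc pmin pmax).biUnion (fun p => Finset.Icc (kmin p) (kmax p)) := by
    intro k hk
    obtain ⟨hk1, p, hp1, hp2⟩ := Finset.mem_filter.mp hk
    obtain ⟨hlo, hhi⟩ := Finset.mem_Icc.mp hk1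
    have hlo' : (g : ℝ) * Q * Q ≤ (k : ℝ) := by exact_mod_cast hlo
    have hhi' : (k : ℝ) ≤ g * Q * Q + Q * Q - 1 := by exact_mod_cast hhi
    -- rearrange touching inequalities
    rw [← hh] at hp1 hp2
    rw [div_lt_div_iff₀ hN0 hh0] at hp1
    rw [div_lt_div_iff₀ hh0 hN0] at hp2
    -- hp1 : ((p:ℝ) - δ) * h < ((k:ℝ) + 1) * N ;  hp2 : (k:ℝ) * N < ((p:ℝ) + δ) * h
    refine Finset.mem_biUnion.mpr ⟨p, Finset.mem_Icc.mpr ⟨?_, ?_⟩, Finset.mem_Icc.mpr ⟨?_, ?_⟩⟩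
    · rw [hpmin]
      apply Int.ceil_le.mpr
      rw [div_sub' (ne_of_gt hh0), div_le_iff₀ hh0]
      nlinarith
    · rw [hpmax]
      apply Int.le_floor.mpr
      rw [div_add' _ _ _ (ne_of_gt hh0), le_div_iff₀ hh0]
      nlinarith
    · apply Int.ceil_le.mpr
      rw [sub_le_iff_le_add, div_le_iff₀ hN0]
      nlinarith
    · apply Int.le_floor.mpr
      rw [le_div_iff₀ hN0]
      nlinarith
  calc (((Finset.Icc (g * (Q:ℤ) * Q) (g * Q * Q + Q * Q - 1)).filter
      (fun k => lacTouch N Q δ (i + 2) k)).card : ℝ)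
      ≤ (((Finset.Icc pmin pmax).biUnion (fun p => Finset.Icc (kmin p) (kmax p))).card : ℝ) := by
        exact_mod_cast Finset.card_le_card hsub
    _ ≤ ∑ p ∈ Finset.Icc pmin pmax, ((Finset.Icc (kmin p) (kmax p)).card : ℝ) := by
        exact_mod_cast Finset.card_biUnion_le
    _ ≤ ∑ _p ∈ Finset.Icc pmin pmax, (2 * δ * h / N + 2) := by
        apply Finset.sum_le_sum
        intro p _
        apply card_Icc_le_real
        · have h1 : (kmax p : ℝ) ≤ ((p : ℝ) + δ) * h / N := Int.floor_le _
          have h2 : ((p : ℝ) - δ) * h / N - 1 ≤ (kmin p : ℝ) := Int.le_ceil _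
          have : ((p:ℝ) + δ) * h / N - (((p:ℝ) - δ) * h / N) = 2 * δ * h / N := by
            field_simp; ring
          linarith
        · positivity
    _ = ((Finset.Icc pmin pmax).card : ℝ) * (2 * δ * h / N + 2) := by
        rw [Finset.sum_const, nsmul_eq_mul]
    _ ≤ ((N : ℝ) * Q ^ 2 / h + 2) * (2 * δ * h / N + 2) := by
        apply mul_le_mul_of_nonneg_right
        · apply card_Icc_le_real
          · have h1 : (pmax : ℝ) ≤ (N : ℝ) * (g * Q * Q + Q * Q) / h + δ := Int.floor_le _
            have h2 : (N : ℝ) * (g * Q * Q) / h - δ ≤ (pmin : ℝ) := Int.le_ceil _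
            have : (N : ℝ) * (g * Q * Q + Q * Q) / h - (N : ℝ) * (g * Q * Q) / h
                = (N : ℝ) * Q ^ 2 / h := by field_simp; ring
            linarith
          · positivity
        · positivity
    _ ≤ 6 * δ * Q ^ 2 + 2 * Q + 4 := by
        have hA : (N : ℝ) * Q ^ 2 / h ≤ Q := by
          rw [div_le_iff₀ hh0]; nlinarith [hNhigh', hQ0]
        have hB : h / N ≤ (Q : ℝ) ^ 2 := by
          rw [div_le_iff₀ hN0]; linarith
        have hA0 : 0 ≤ (N : ℝ) * Q ^ 2 / h := by positivity
        have hB0 : 0 ≤ h / (N:ℝ) := by positivity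
        have hAB : ((N : ℝ) * Q ^ 2 / h) * (h / N) = (Q:ℝ) ^ 2 := by
          field_simp
        have expand : ((N : ℝ) * Q ^ 2 / h + 2) * (2 * δ * h / N + 2)
            = 2 * δ * (((N : ℝ) * Q ^ 2 / h) * (h / N)) + 2 * ((N:ℝ) * Q^2 / h)
              + 4 * δ * (h / N) + 4 := by
          field_simp; ring
        rw [expand, hAB]
        nlinarith
end counting2

section steps
open scoped Classical
variable {n : ℕ → ℕ} {Q : ℕ} {δ : ℝ}


open Finset in
lemma freq_count (hQ : 2 ≤ Q) (hδ0 : 0 < δ) (hδ1 : δ ≤ 1/2) {j i : ℕ}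
    (hw : lacWind n Q (i + 1) j) (hn : 1 ≤ n j) :
    ((((lacFam n Q δ (i + 1)).biUnion fun k =>
        Finset.Icc (k * (Q : ℤ)) (k * Q + Q - 1)).filter
      (fun k => lacTouch (n j) Q δ (i + 2) k)).card : ℝ)
      ≤ (lacFam n Q δ i).card * (6 * δ * Q ^ 2 + 2 * Q + 4) := by
  have hQ1 : 1 ≤ Q := by omega
  have hQZ : (1 : ℤ) ≤ (Q : ℤ) := by exact_mod_cast hQ1
  have hsub : (((lacFam n Q δ (i + 1)).biUnion fun k =>
        Finset.Icc (k * (Q : ℤ)) (k * Q + Q - 1)).filter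
      (fun k => lacTouch (n j) Q δ (i + 2) k)) ⊆
      (lacFam n Q δ i).biUnion fun g =>
        (Finset.Icc (g * (Q:ℤ) * Q) (g * Q * Q + Q * Q - 1)).filter
          (fun k => lacTouch (n j) Q δ (i + 2) k) := by
    intro k hk
    obtain ⟨hk1, htouch⟩ := Finset.mem_filter.mp hk
    obtain ⟨k', hk', hmem⟩ := Finset.mem_biUnion.mp hk1
    obtain ⟨h1, h2⟩ := Finset.mem_Icc.mp hmem
    obtain ⟨g, hg, g1, g2⟩ := exists_parent hk'
    refine Finset.mem_biUnion.mpr ⟨g, hg, Finset.mem_filter.mpr ⟨Finset.mem_Icc.mpr ⟨?_, ?_⟩, htouch⟩⟩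
    · calc g * (Q:ℤ) * Q ≤ k' * Q := by nlinarith
        _ ≤ k := h1
    · have : k < (k' + 1) * Q := by linarith
      have h3 : k' + 1 ≤ (g + 1) * Q := g2
      calc k ≤ (k' + 1) * Q - 1 := by omega
        _ ≤ (g + 1) * Q * Q - 1 := by nlinarith
        _ = g * Q * Q + Q * Q - 1 := by ring
  calc ((((lacFam n Q δ (i + 1)).biUnion fun k =>
        Finset.Icc (k * (Q : ℤ)) (k * Q + Q - 1)).filter
      (fun k => lacTouch (n j) Q δ (i + 2) k)).card : ℝ)
      ≤ (((lacFam n Q δ i).biUnion fun g =>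
        (Finset.Icc (g * (Q:ℤ) * Q) (g * Q * Q + Q * Q - 1)).filter
          (fun k => lacTouch (n j) Q δ (i + 2) k)).card : ℝ) := by
        exact_mod_cast Finset.card_le_card hsub
    _ ≤ ∑ g ∈ lacFam n Q δ i, ((((Finset.Icc (g * (Q:ℤ) * Q) (g * Q * Q + Q * Q - 1)).filter
          (fun k => lacTouch (n j) Q δ (i + 2) k)).card : ℝ)) := by
        exact_mod_cast Finset.card_biUnion_le
    _ ≤ ∑ _g ∈ lacFam n Q δ i, (6 * δ * Q ^ 2 + 2 * Q + 4) := by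
        apply Finset.sum_le_sum
        intro g _
        exact local_count hQ hδ0 hδ1 hn i hw.2.1 hw.2.2 g
    _ = (lacFam n Q δ i).card * (6 * δ * Q ^ 2 + 2 * Q + 4) := by
        rw [Finset.sum_const, nsmul_eq_mul]

open Finset in
lemma step_bound (hQ : 2 ≤ Q) (hδ0 : 0 < δ) (hδ1 : δ ≤ 1/2)
    (hn : ∀ j, 1 ≤ j → 1 ≤ n j) {b : ℕ}
    (hwb : ∀ i j j', lacWind n Q i j → lacWind n Q i j' → j ≤ j' → j' ≤ j + b)
    (hnum : ((b : ℝ) + 1) * (6 * δ * Q ^ 2 + 2 * Q + 4) ≤ (Q : ℝ) ^ 2 / 4) {i : ℕ}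
    (IH : (Q : ℝ) * (lacFam n Q δ i).card ≤ 2 * (lacFam n Q δ (i + 1)).card) :
    (Q : ℝ) * (lacFam n Q δ (i + 1)).card ≤ 2 * (lacFam n Q δ (i + 2)).card := by
  have hQ1 : 1 ≤ Q := by omega
  have hQ0 : (0 : ℝ) < (Q : ℝ) := by positivity
  have hQ2 : (2 : ℝ) ≤ (Q : ℝ) := by exact_mod_cast hQ
  set C : Finset ℤ := (lacFam n Q δ (i + 1)).biUnion fun k =>
      Finset.Icc (k * (Q : ℤ)) (k * Q + Q - 1) with hC
  have hCcard : C.card = Q * (lacFam n Q δ (i + 1)).card := card_children hQ1 _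
  set Good : ℤ → Prop := fun k => ∀ j : ℕ, lacWind n Q (i + 1) j → ¬ lacTouch (n j) Q δ (i + 2) k
    with hGood
  have hfam : lacFam n Q δ (i + 2) = C.filter Good := lacFam_succ (i + 1)
  have hsplit : (C.filter Good).card + (C.filter (fun k => ¬ Good k)).card = C.card :=
    Finset.card_filter_add_card_filter_not _
  set K : Finset ℤ := C.filter (fun k => ¬ Good k) with hK
  -- bound K.card
  have hKbound : (K.card : ℝ) ≤ ((b : ℝ) + 1) * ((lacFam n Q δ i).card * (6 * δ * Q ^ 2 + 2 * Q + 4)) := by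
    by_cases hex : ∃ j, lacWind n Q (i + 1) j
    · set j₀ : ℕ := Nat.find hex with hj₀
      have hj₀w : lacWind n Q (i + 1) j₀ := Nat.find_spec hex
      have hsubK : K ⊆ (Finset.Icc j₀ (j₀ + b)).biUnion fun j =>
          C.filter (fun k => lacWind n Q (i + 1) j ∧ lacTouch (n j) Q δ (i + 2) k) := by
        intro k hk
        obtain ⟨hkC, hkB⟩ := Finset.mem_filter.mp hk
        simp only [hGood] at hkB
        push_neg at hkB
        obtain ⟨j, hjw, hjt⟩ := hkB
        refine Finset.mem_biUnion.mpr ⟨j, Finset.mem_Icc.mpr ⟨Nat.find_min' hex hjw, ?_⟩,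
          Finset.mem_filter.mpr ⟨hkC, hjw, hjt⟩⟩
        exact hwb (i + 1) j₀ j hj₀w hjw (Nat.find_min' hex hjw)
      have h1 : (K.card : ℝ) ≤ ∑ j ∈ Finset.Icc j₀ (j₀ + b),
          ((C.filter (fun k => lacWind n Q (i + 1) j ∧ lacTouch (n j) Q δ (i + 2) k)).card : ℝ) := by
        calc (K.card : ℝ) ≤ (((Finset.Icc j₀ (j₀ + b)).biUnion fun j =>
            C.filter (fun k => lacWind n Q (i + 1) j ∧ lacTouch (n j) Q δ (i + 2) k)).card : ℝ) := by
              exact_mod_cast Finset.card_le_card hsubK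
          _ ≤ _ := by exact_mod_cast Finset.card_biUnion_le
      have h2 : ∀ j, ((C.filter (fun k => lacWind n Q (i + 1) j ∧
          lacTouch (n j) Q δ (i + 2) k)).card : ℝ)
          ≤ (lacFam n Q δ i).card * (6 * δ * Q ^ 2 + 2 * Q + 4) := by
        intro j
        by_cases hjw : lacWind n Q (i + 1) j
        · calc ((C.filter (fun k => lacWind n Q (i + 1) j ∧
              lacTouch (n j) Q δ (i + 2) k)).card : ℝ)
              ≤ ((C.filter (fun k => lacTouch (n j) Q δ (i + 2) k)).card : ℝ) := by
                apply Nat.cast_le.mpr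
                apply Finset.card_le_card
                intro x hx
                rw [Finset.mem_filter] at hx ⊢
                exact ⟨hx.1, hx.2.2⟩
            _ ≤ _ := freq_count hQ hδ0 hδ1 hjw (hn j hjw.1)
        · have : C.filter (fun k => lacWind n Q (i + 1) j ∧ lacTouch (n j) Q δ (i + 2) k) = ∅ := by
            apply Finset.filter_false_of_mem
            intro k _
            exact fun hc => hjw hc.1
          rw [this]
          simp only [Finset.card_empty, Nat.cast_zero]
          positivity
      calc (K.card : ℝ) ≤ ∑ j ∈ Finset.Icc j₀ (j₀ + b),
          ((lacFam n Q δ i).card * (6 * δ * Q ^ 2 + 2 * Q + 4)) := by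
            refine h1.trans (Finset.sum_le_sum fun j _ => h2 j)
        _ = ((b : ℝ) + 1) * ((lacFam n Q δ i).card * (6 * δ * Q ^ 2 + 2 * Q + 4)) := by
            rw [Finset.sum_const, nsmul_eq_mul, Nat.card_Icc,
              show j₀ + b + 1 - j₀ = b + 1 by omega]
            push_cast
            ring
    · have hKempty : K = ∅ := by
        rw [hK]
        apply Finset.filter_false_of_mem
        intro k _
        intro hcon
        exact hcon (fun j hjw => absurd ⟨j, hjw⟩ hex)
      rw [hKempty]
      simp only [Finset.card_empty, Nat.cast_zero]
      positivity
  -- assemble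
  have hIH' : ((lacFam n Q δ i).card : ℝ) ≤ 2 * (lacFam n Q δ (i + 1)).card / Q := by
    rw [le_div_iff₀ hQ0]; linarith
  have hm2 : ((lacFam n Q δ (i + 2)).card : ℝ)
      = (Q : ℝ) * (lacFam n Q δ (i + 1)).card - K.card := by
    rw [hfam]
    have : ((C.filter Good).card : ℝ) + (K.card : ℝ) = (C.card : ℝ) := by exact_mod_cast hsplit
    have hCc : (C.card : ℝ) = (Q : ℝ) * (lacFam n Q δ (i + 1)).card := by exact_mod_cast hCcard
    linarith
  have hBpos : (0:ℝ) < 6 * δ * Q ^ 2 + 2 * Q + 4 := by positivity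
  have hKfinal : 2 * (K.card : ℝ) ≤ (Q : ℝ) * (lacFam n Q δ (i + 1)).card := by
    have hm1nn : (0:ℝ) ≤ ((lacFam n Q δ (i+1)).card : ℝ) := by positivity
    calc 2 * (K.card : ℝ) ≤ 2 * (((b : ℝ) + 1) * ((lacFam n Q δ i).card * (6 * δ * Q ^ 2 + 2 * Q + 4))) := by linarith
      _ ≤ 2 * (((b : ℝ) + 1) * ((2 * (lacFam n Q δ (i + 1)).card / Q) * (6 * δ * Q ^ 2 + 2 * Q + 4))) := by
          apply mul_le_mul_of_nonneg_left _ (by norm_num : (0:ℝ) ≤ 2)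
          apply mul_le_mul_of_nonneg_left _ (by positivity)
          apply mul_le_mul_of_nonneg_right hIH' hBpos.le
      _ = (4 * (((b:ℝ)+1) * (6 * δ * Q ^ 2 + 2 * Q + 4)) / Q^2) * ((Q:ℝ) * (lacFam n Q δ (i + 1)).card) := by
          field_simp
          ring
      _ ≤ 1 * ((Q:ℝ) * (lacFam n Q δ (i + 1)).card) := by
          apply mul_le_mul_of_nonneg_right
          · rw [div_le_one (by positivity)]
            linarith
          · positivity
      _ = (Q : ℝ) * (lacFam n Q δ (i + 1)).card := by ring
  rw [hm2]
  linarith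

end steps

section existence
open scoped Classical
variable {n : ℕ → ℕ} {Q : ℕ} {δ : ℝ}


lemma fam_one_card (hQ : 2 ≤ Q) (hn : ∀ j, 1 ≤ j → 1 ≤ n j) :
    (lacFam n Q δ 1).card = Q := by
  rw [lacFam_succ 0]
  have hwind : ∀ j, ¬ lacWind n Q 0 j := by
    intro j ⟨hj1, _, hj3⟩
    have h1 := hn j hj1
    simp at hj3
    omega
  rw [Finset.filter_true_of_mem (fun k _ => fun j hw => absurd hw (hwind j))]
  show ((({0} : Finset ℤ).biUnion fun k => Finset.Icc (k * (Q : ℤ)) (k * Q + Q - 1)).card) = Q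
  rw [Finset.singleton_biUnion]
  rw [Int.card_Icc]
  simp only [zero_mul, zero_add, sub_add_cancel]
  exact Int.toNat_natCast Q

lemma fam_invariant (hQ : 2 ≤ Q) (hδ0 : 0 < δ) (hδ1 : δ ≤ 1/2)
    (hn : ∀ j, 1 ≤ j → 1 ≤ n j) {b : ℕ}
    (hwb : ∀ i j j', lacWind n Q i j → lacWind n Q i j' → j ≤ j' → j' ≤ j + b)
    (hnum : ((b : ℝ) + 1) * (6 * δ * Q ^ 2 + 2 * Q + 4) ≤ (Q : ℝ) ^ 2 / 4) :
    ∀ i, (Q : ℝ) * (lacFam n Q δ i).card ≤ 2 * (lacFam n Q δ (i + 1)).card := by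
  intro i
  induction i with
  | zero =>
    have h0 : (lacFam n Q δ 0).card = 1 := by rw [lacFam]; rfl
    have h1 : (lacFam n Q δ 1).card = Q := fam_one_card hQ hn
    rw [h0, h1]
    have : (0:ℝ) ≤ (Q:ℝ) := by positivity
    push_cast
    linarith
  | succ i IH => exact step_bound hQ hδ0 hδ1 hn hwb hnum IH

lemma fam_nonempty (hQ : 2 ≤ Q) (hδ0 : 0 < δ) (hδ1 : δ ≤ 1/2)
    (hn : ∀ j, 1 ≤ j → 1 ≤ n j) {b : ℕ}
    (hwb : ∀ i j j', lacWind n Q i j → lacWind n Q i j' → j ≤ j' → j' ≤ j + b)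
    (hnum : ((b : ℝ) + 1) * (6 * δ * Q ^ 2 + 2 * Q + 4) ≤ (Q : ℝ) ^ 2 / 4) :
    ∀ i, (lacFam n Q δ i).Nonempty := by
  intro i
  induction i with
  | zero => exact ⟨0, by rw [lacFam]; exact Finset.mem_singleton_self 0⟩
  | succ i IH =>
    rw [← Finset.card_pos]
    have := fam_invariant hQ hδ0 hδ1 hn hwb hnum i
    have hc : 0 < (lacFam n Q δ i).card := Finset.card_pos.mpr IH
    have hQ0 : (0:ℝ) < (Q:ℝ) := by positivity
    by_contra hc2
    push_neg at hc2
    have h0 : (lacFam n Q δ (i+1)).card = 0 := by omega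
    rw [h0] at this
    have h1 : (1:ℝ) ≤ ((lacFam n Q δ i).card : ℝ) := by exact_mod_cast hc
    have h2 : (2:ℝ) ≤ (Q:ℝ) := by exact_mod_cast hQ
    push_cast at this
    nlinarith

/-- The compact set at stage `i`. -/
noncomputable def lacK (n : ℕ → ℕ) (Q : ℕ) (δ : ℝ) (i : ℕ) : Set ℝ :=
  ⋃ k ∈ lacFam n Q δ i, Set.Icc ((k : ℝ) / (Q : ℝ) ^ i) (((k : ℝ) + 1) / (Q : ℝ) ^ i)

lemma lacK_nested (hQ : 2 ≤ Q) (i : ℕ) : lacK n Q δ (i + 1) ⊆ lacK n Q δ i := by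
  have hQ0 : (0:ℝ) < (Q:ℝ) := by positivity
  intro α hα
  simp only [lacK, Set.mem_iUnion] at hα ⊢
  obtain ⟨k, hk, hmem⟩ := hα
  obtain ⟨k', hk', h1, h2⟩ := exists_parent hk
  refine ⟨k', hk', ?_⟩
  have hp : (0:ℝ) < (Q:ℝ) ^ i := by positivity
  have hp1 : (0:ℝ) < (Q:ℝ) ^ (i+1) := by positivity
  have hl : (k' : ℝ) / (Q:ℝ) ^ i ≤ (k : ℝ) / (Q:ℝ) ^ (i + 1) := by
    rw [div_le_div_iff₀ hp hp1]
    have : ((k' * Q : ℤ) : ℝ) ≤ (k : ℝ) := by exact_mod_cast h1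
    push_cast at this
    calc (k' : ℝ) * (Q:ℝ) ^ (i+1) = ((k' : ℝ) * Q) * (Q:ℝ) ^ i := by ring
      _ ≤ (k : ℝ) * (Q:ℝ) ^ i := by nlinarith
  have hr : ((k : ℝ) + 1) / (Q:ℝ) ^ (i + 1) ≤ ((k' : ℝ) + 1) / (Q:ℝ) ^ i := by
    rw [div_le_div_iff₀ hp1 hp]
    have : ((k + 1 : ℤ) : ℝ) ≤ (((k' + 1) * Q : ℤ) : ℝ) := by exact_mod_cast h2
    push_cast at this
    calc ((k : ℝ) + 1) * (Q:ℝ) ^ i ≤ (((k' : ℝ) + 1) * Q) * (Q:ℝ) ^ i := by nlinarith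
      _ = ((k' : ℝ) + 1) * (Q:ℝ) ^ (i + 1) := by ring
  exact ⟨le_trans hl hmem.1, le_trans hmem.2 hr⟩

lemma exists_alpha (hQ : 2 ≤ Q) (hδ0 : 0 < δ) (hδ1 : δ ≤ 1/2)
    (hn : ∀ j, 1 ≤ j → 1 ≤ n j) {b : ℕ}
    (hwb : ∀ i j j', lacWind n Q i j → lacWind n Q i j' → j ≤ j' → j' ≤ j + b)
    (hnum : ((b : ℝ) + 1) * (6 * δ * Q ^ 2 + 2 * Q + 4) ≤ (Q : ℝ) ^ 2 / 4) :
    ∃ α : ℝ, ∀ j, 1 ≤ j → ∀ p : ℤ, δ ≤ |α * n j - p| := by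
  have hQ0 : (0:ℝ) < (Q:ℝ) := by positivity
  have hQ1 : (1:ℝ) < (Q:ℝ) := by
    have : (2:ℝ) ≤ (Q:ℝ) := by exact_mod_cast hQ
    linarith
  -- compact nested intersection
  have hne : ∀ i, (lacK n Q δ i).Nonempty := by
    intro i
    obtain ⟨k, hk⟩ := fam_nonempty hQ hδ0 hδ1 hn hwb hnum i
    refine ⟨(k:ℝ) / (Q:ℝ)^i, ?_⟩
    simp only [lacK, Set.mem_iUnion]
    refine ⟨k, hk, le_refl _, ?_⟩
    gcongr
    linarith
  have hcl : ∀ i, IsClosed (lacK n Q δ i) := by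
    intro i
    exact Set.Finite.isClosed_biUnion (lacFam n Q δ i).finite_toSet
      (fun k _ => isClosed_Icc)
  have hcp : IsCompact (lacK n Q δ 0) :=
    Set.Finite.isCompact_biUnion (lacFam n Q δ 0).finite_toSet (fun k _ => isCompact_Icc)
  obtain ⟨α, hα⟩ := IsCompact.nonempty_iInter_of_sequence_nonempty_isCompact_isClosed
    (lacK n Q δ) (lacK_nested hQ) hne hcp hcl
  refine ⟨α, ?_⟩
  intro j hj p
  by_contra hcon
  push_neg at hcon
  -- find window index for n j
  have hNpos : (1:ℝ) ≤ (n j : ℝ) := by exact_mod_cast hn j hj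
  have hex : ∃ i : ℕ, (n j : ℝ) < (Q:ℝ) ^ i := pow_unbounded_of_one_lt _ hQ1
  obtain ⟨i₀, hfound, hi₀min⟩ : ∃ i₀ : ℕ, ((n j : ℝ) < (Q:ℝ)^i₀) ∧
      ∀ m, m < i₀ → ¬((n j : ℝ) < (Q:ℝ)^m) :=
    ⟨Nat.find hex, Nat.find_spec hex, fun m hm => Nat.find_min hex hm⟩
  have hi₀pos : i₀ ≠ 0 := by
    intro h0
    rw [h0, pow_zero] at hfound
    linarith
  have hlow : (Q:ℝ) ^ i₀ ≤ Q * n j := by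
    obtain ⟨i₁, hi₁⟩ : ∃ i₁, i₀ = i₁ + 1 := ⟨i₀ - 1, by omega⟩
    have hmin := hi₀min i₁ (by omega)
    push_neg at hmin
    rw [hi₁]
    calc (Q:ℝ) ^ (i₁+1) = Q * (Q:ℝ)^i₁ := by ring
      _ ≤ Q * n j := by nlinarith
  have hwind : lacWind n Q i₀ j := ⟨hj, hlow, hfound⟩
  -- α is in some good cell at level i₀ + 1
  have hαK : α ∈ lacK n Q δ (i₀ + 1) := by
    have := Set.mem_iInter.mp hα (i₀ + 1)
    exact this
  simp only [lacK, Set.mem_iUnion] at hαK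
  obtain ⟨k, hk, hmem⟩ := hαK
  have hnt := not_touch hk hwind
  apply hnt
  -- produce the touching witness from |α n j - p| < δ
  have hN0 : (0:ℝ) < (n j : ℝ) := by linarith
  have habs := abs_lt.mp hcon
  refine ⟨p, ?_, ?_⟩
  · have h1 : ((p:ℝ) - δ) / (n j) < α := by
      rw [div_lt_iff₀ hN0]
      nlinarith [habs.1]
    exact lt_of_lt_of_le h1 hmem.2
  · have h2 : α < ((p:ℝ) + δ) / (n j) := by
      rw [lt_div_iff₀ hN0]
      nlinarith [habs.2]
    exact lt_of_le_of_lt hmem.1 h2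

end existence

section numerics

set_option maxHeartbeats 1000000 in
lemma numeric_bounds {ε L δ : ℝ} {Q b : ℕ} (hε0 : 0 < ε) (hε4 : ε < 1/4)
    (hL : L = -Real.log ε) (hδ : δ = ε / (1200 * L)) (hQ : Q = ⌈(ε⁻¹)^8⌉₊)
    (hbb : (b : ℝ) ≤ Real.log Q / Real.log (1 + ε)) :
    1 ≤ L ∧ 0 < δ ∧ δ ≤ 1/2 ∧ 2 ≤ Q ∧
      ((b : ℝ) + 1) * (6 * δ * Q ^ 2 + 2 * Q + 4) ≤ (Q : ℝ) ^ 2 / 4 := by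
  have hεinv : (4:ℝ) < ε⁻¹ := by
    rw [lt_inv_comm₀ (by norm_num) hε0]
    linarith
  have hL' : L = Real.log ε⁻¹ := by rw [hL, Real.log_inv]
  have hlog2 : (0.6931471803 : ℝ) < Real.log 2 := Real.log_two_gt_d9
  have hlog2' : Real.log 2 < 0.6931471808 := Real.log_two_lt_d9
  have hL1 : 1 ≤ L := by
    rw [hL']
    have h4 : Real.log 4 ≤ Real.log ε⁻¹ := Real.log_le_log (by norm_num) hεinv.le
    have h4' : Real.log 4 = 2 * Real.log 2 := by
      rw [show (4:ℝ) = 2^2 by norm_num, Real.log_pow]; push_cast; ring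
    linarith
  have hLpos : 0 < L := by linarith
  have hLe : L ≤ ε⁻¹ := by
    rw [hL']
    have := Real.log_le_sub_one_of_pos (show (0:ℝ) < ε⁻¹ by positivity)
    linarith
  have hδ0 : 0 < δ := by rw [hδ]; positivity
  have hδ1 : δ ≤ 1/2 := by
    rw [hδ, div_le_iff₀ (by positivity)]
    nlinarith
  have hQlow : (ε⁻¹)^8 ≤ (Q : ℝ) := by rw [hQ]; exact Nat.le_ceil _
  have hQbig : (4:ℝ)^8 ≤ (Q:ℝ) := by
    calc (4:ℝ)^8 ≤ (ε⁻¹)^8 := by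
          apply pow_le_pow_left₀ (by norm_num) hεinv.le
      _ ≤ (Q:ℝ) := hQlow
  have hQ2 : 2 ≤ Q := by
    have : (2:ℝ) ≤ (Q:ℝ) := by nlinarith
    exact_mod_cast this
  have hQhigh : (Q : ℝ) ≤ 2 * (ε⁻¹)^8 := by
    rw [hQ]
    have h1 : (⌈(ε⁻¹)^8⌉₊ : ℝ) < (ε⁻¹)^8 + 1 := Nat.ceil_lt_add_one (by positivity)
    have h2 : (1:ℝ) ≤ (ε⁻¹)^8 := one_le_pow₀ (by linarith)
    linarith
  have hQ1R : (1:ℝ) ≤ (Q:ℝ) := by nlinarith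
  -- log(1+ε) ≥ (4/5) ε
  have hlog1ε : (4/5) * ε ≤ Real.log (1 + ε) := by
    have h1 := Real.log_le_sub_one_of_pos (show (0:ℝ) < (1+ε)⁻¹ by positivity)
    rw [Real.log_inv] at h1
    have h2 : (1+ε)⁻¹ - 1 = -(ε / (1+ε)) := by field_simp; ring
    rw [h2] at h1
    have h3 : (4/5) * ε ≤ ε / (1+ε) := by
      rw [le_div_iff₀ (by linarith)]
      nlinarith
    linarith
  -- log Q ≤ 9 L
  have hlogQ : Real.log Q ≤ 9 * L := by
    have h1 : Real.log Q ≤ Real.log (2 * (ε⁻¹)^8) :=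
      Real.log_le_log (by linarith) hQhigh
    have h2 : Real.log (2 * (ε⁻¹)^8) = Real.log 2 + 8 * Real.log ε⁻¹ := by
      rw [Real.log_mul (by norm_num) (by positivity), Real.log_pow]
      push_cast; ring
    rw [h2, ← hL'] at h1
    linarith
  -- (b+1) * ε ≤ 12 L
  have hbε : ((b:ℝ) + 1) * ε ≤ 12 * L := by
    have hlogpos : 0 < Real.log (1 + ε) := Real.log_pos (by linarith)
    have h1 : (b:ℝ) * Real.log (1 + ε) ≤ Real.log Q := by
      rw [← le_div_iff₀ hlogpos]; exact hbb
    have h2 : (b:ℝ) * ((4/5) * ε) ≤ 9 * L := by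
      have hb0 : (0:ℝ) ≤ (b:ℝ) := by positivity
      have h3 := mul_le_mul_of_nonneg_left hlog1ε hb0
      linarith
    nlinarith [hε0, hL1]
  set X : ℝ := (b:ℝ) + 1 with hX
  have hX0 : 0 < X := by rw [hX]; positivity
  clear_value X
  have hXδ : X * δ ≤ 1/100 := by
    rw [hδ, show X * (ε / (1200 * L)) = (X * ε) / (1200 * L) by ring,
      div_le_iff₀ (by positivity)]
    linarith [hbε]
  have hε8Q : 1 ≤ ε^8 * (Q:ℝ) := by
    calc (1:ℝ) = ε^8 * (ε⁻¹)^8 := by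
          field_simp
      _ ≤ ε^8 * Q := by nlinarith [pow_pos hε0 8]
  have hXε2 : X * ε^2 ≤ 12 := by
    have h1 : X * ε ≤ 12 * ε⁻¹ := by
      have : (12:ℝ) * L ≤ 12 * ε⁻¹ := by linarith
      linarith [hbε]
    have h2 : (12 * ε⁻¹) * ε = 12 := by field_simp
    calc X * ε^2 = (X * ε) * ε := by ring
      _ ≤ (12 * ε⁻¹) * ε := by nlinarith
      _ = 12 := h2
  have hXQ : X ≤ 12 * ε^6 * Q := by
    have h1 : X * ε^2 ≤ (12 * ε^6 * (Q:ℝ)) * ε^2 := by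
      have he : (12 * ε^6 * (Q:ℝ)) * ε^2 = 12 * (ε^8 * Q) := by ring
      rw [he]
      nlinarith [hε8Q]
    exact le_of_mul_le_mul_right h1 (by positivity)
  have hε6 : ε^6 ≤ 1/4096 := by
    have := pow_le_pow_left₀ hε0.le hε4.le 6
    norm_num at this
    linarith
  have hQsq : (0:ℝ) ≤ (Q:ℝ)^2 := sq_nonneg _
  refine ⟨hL1, hδ0, hδ1, hQ2, ?_⟩
  have t1 : X * (6 * δ * (Q:ℝ)^2) ≤ (6/100) * (Q:ℝ)^2 := by nlinarith [hXδ, hQsq]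
  have t2 : X * (2 * (Q:ℝ)) ≤ 24 * ε^6 * (Q:ℝ)^2 := by
    nlinarith [mul_le_mul_of_nonneg_right hXQ (by positivity : (0:ℝ) ≤ 2 * (Q:ℝ))]
  have t3 : X * 4 ≤ 48 * ε^6 * (Q:ℝ)^2 := by
    have h1 : X * 4 ≤ 48 * ε^6 * (Q:ℝ) := by nlinarith [hXQ]
    have h2 : 48 * ε^6 * (Q:ℝ) ≤ 48 * ε^6 * (Q:ℝ)^2 := by
      nlinarith [hQ1R, pow_pos hε0 6]
    linarith
  have hc : 72 * ε^6 * (Q:ℝ)^2 ≤ (72/4096) * (Q:ℝ)^2 := by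
    nlinarith [mul_le_mul_of_nonneg_right hε6 hQsq]
  calc X * (6 * δ * Q ^ 2 + 2 * Q + 4)
      = X * (6 * δ * (Q:ℝ)^2) + X * (2 * (Q:ℝ)) + X * 4 := by ring
    _ ≤ (6/100) * (Q:ℝ)^2 + 24 * ε^6 * (Q:ℝ)^2 + 48 * ε^6 * (Q:ℝ)^2 := by
        linarith
    _ ≤ (6/100) * (Q:ℝ)^2 + (72/4096) * (Q:ℝ)^2 := by linarith
    _ ≤ (Q : ℝ) ^ 2 / 4 := by nlinarith [hQsq]

end numerics


section windowstuff

lemma lac_iter {ε : ℝ} {n : ℕ → ℕ} (hε0 : 0 < ε)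
    (hlac : ∀ j, 1 ≤ j → (1 + ε) * (n j : ℝ) ≤ (n (j + 1) : ℝ)) :
    ∀ j, 1 ≤ j → ∀ d : ℕ, (1 + ε) ^ d * (n j : ℝ) ≤ n (j + d) := by
  intro j hj d
  induction d with
  | zero => simp
  | succ d IH =>
    have h1 := hlac (j + d) (by omega)
    have hnn : (0:ℝ) ≤ (n j : ℝ) := by positivity
    have h2 : (1 + ε) ^ (d+1) * (n j : ℝ) = (1 + ε) * ((1 + ε) ^ d * (n j : ℝ)) := by ring
    rw [h2, show j + (d+1) = (j + d) + 1 from rfl]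
    calc (1 + ε) * ((1 + ε) ^ d * (n j : ℝ)) ≤ (1 + ε) * (n (j + d) : ℝ) := by nlinarith
      _ ≤ _ := h1

lemma window_bound {ε : ℝ} {n : ℕ → ℕ} {Q : ℕ} (hε0 : 0 < ε) (hQ1 : 1 < Q)
    (hpos : ∀ j, 1 ≤ j → 0 < n j)
    (hlac : ∀ j, 1 ≤ j → (1 + ε) * (n j : ℝ) ≤ (n (j + 1) : ℝ)) :
    ∀ i j j', lacWind n Q i j → lacWind n Q i j' → j ≤ j' →
      j' ≤ j + ⌊Real.log Q / Real.log (1 + ε)⌋₊ := by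
  intro i j j' hw hw' hjj
  set b := ⌊Real.log Q / Real.log (1 + ε)⌋₊ with hb
  obtain ⟨d, rfl⟩ : ∃ d : ℕ, j' = j + d := ⟨j' - j, by omega⟩
  have hQ0 : (0:ℝ) < (Q:ℝ) := by positivity
  have hQR1 : (1:ℝ) < (Q:ℝ) := by exact_mod_cast hQ1
  have hnj : (0:ℝ) < (n j : ℝ) := by exact_mod_cast hpos j hw.1
  have hiter := lac_iter hε0 hlac j hw.1 d
  have hkey : (1 + ε) ^ d < (Q : ℝ) := by
    have h1 : (Q:ℝ) ^ i ≤ Q * n j := hw.2.1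
    have h2 : (n (j + d) : ℝ) < (Q:ℝ) ^ i := hw'.2.2
    have h3 : (1 + ε) ^ d * (n j : ℝ) < (Q:ℝ) * n j := by
      calc (1 + ε) ^ d * (n j : ℝ) ≤ (n (j + d) : ℝ) := hiter
        _ < (Q:ℝ) ^ i := h2
        _ ≤ Q * n j := h1
    exact lt_of_mul_lt_mul_right (by linarith [h3]) hnj.le
  have hd : (d : ℝ) ≤ Real.log Q / Real.log (1 + ε) := by
    have hlogpos : 0 < Real.log (1 + ε) := Real.log_pos (by linarith)
    rw [le_div_iff₀ hlogpos]
    have h4 : Real.log ((1 + ε) ^ d) < Real.log Q :=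
      Real.log_lt_log (by positivity) hkey
    rw [Real.log_pow] at h4
    push_cast at h4 ⊢
    linarith
  have : d ≤ b := Nat.le_floor hd
  omega

end windowstuff

/-- There is a universal constant `c > 0` such that for every `0 < ε < 1/4` and every
sequence of positive integers with `n (j+1) ≥ (1+ε) * n j` for all `j ≥ 1`, the chromatic
number of the distance graph of `S = {n j : j ≥ 1}` is at most `1 + c⁻¹ * ε⁻¹ * |log ε|`. -/
theorem chromatic_number_lacunary_distance_graph :
    ∃ c : ℝ, 0 < c ∧
      ∀ ε : ℝ, 0 < ε → ε < 1 / 4 →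
        ∀ n : ℕ → ℕ, (∀ j, 1 ≤ j → 0 < n j) →
          (∀ j, 1 ≤ j → (1 + ε) * (n j : ℝ) ≤ (n (j + 1) : ℝ)) →
          ∃ m : ℕ, (m : ℝ) ≤ 1 + c⁻¹ * ε⁻¹ * |Real.log ε| ∧
            (distGraph {k : ℕ | ∃ j, 1 ≤ j ∧ n j = k}).chromaticNumber ≤ (m : ℕ∞) := by
  refine ⟨1/1200, by norm_num, ?_⟩
  intro ε hε0 hε4 n hpos hlac
  set L : ℝ := -Real.log ε with hLdef
  set δ : ℝ := ε / (1200 * L) with hδdef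
  set Q : ℕ := ⌈(ε⁻¹)^8⌉₊ with hQdef
  set b : ℕ := ⌊Real.log Q / Real.log (1 + ε)⌋₊ with hbdef
  have hε1 : ε < 1 := by linarith
  have hlog1ε : 0 < Real.log (1 + ε) := Real.log_pos (by linarith)
  have hbb : (b : ℝ) ≤ Real.log Q / Real.log (1 + ε) := by
    rw [hbdef]
    apply Nat.floor_le
    apply div_nonneg _ hlog1ε.le
    apply Real.log_nonneg
    have : 1 ≤ Q := Nat.one_le_iff_ne_zero.mpr (by
      rw [hQdef]
      simp [Nat.ceil_eq_zero]
      positivity)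
    exact_mod_cast this
  obtain ⟨hL1, hδ0, hδ1, hQ2, hnum⟩ := numeric_bounds hε0 hε4 hLdef hδdef hQdef hbb
  have hn1 : ∀ j, 1 ≤ j → 1 ≤ n j := fun j hj => hpos j hj
  have hQ1 : 1 < Q := by omega
  have hwb := window_bound hε0 hQ1 hpos hlac
  rw [← hbdef] at hwb
  obtain ⟨α, hα⟩ := exists_alpha hQ2 hδ0 hδ1 hn1 hwb hnum
  -- number of colors
  set m : ℕ := ⌈δ⁻¹⌉₊ with hmdef
  have hmpos : 0 < m := by
    rw [hmdef]
    exact Nat.ceil_pos.mpr (by positivity)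
  have hmR : (0:ℝ) < (m:ℝ) := by exact_mod_cast hmpos
  have hminv : (1:ℝ)/m ≤ δ := by
    have h1 : δ⁻¹ ≤ (m:ℝ) := by rw [hmdef]; exact Nat.le_ceil _
    rw [div_le_iff₀ hmR, ← div_le_iff₀' hδ0, one_div]
    exact h1
  refine ⟨m, ?_, ?_⟩
  · -- size bound
    have habs : |Real.log ε| = L := by
      rw [hLdef, abs_of_neg (Real.log_neg hε0 hε1)]
    rw [habs]
    have hδinv : δ⁻¹ = 1200 * ε⁻¹ * L := by
      rw [hδdef, inv_div]
      field_simp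
    have h1 : (m:ℝ) < δ⁻¹ + 1 := by
      rw [hmdef]
      exact Nat.ceil_lt_add_one (by positivity)
    rw [hδinv] at h1
    have : ((1:ℝ)/1200)⁻¹ = 1200 := by norm_num
    rw [this]
    linarith
  · -- chromatic bound
    apply SimpleGraph.Colorable.chromaticNumber_le
    have hbound : ∀ x : ℤ, ⌊Int.fract (α * x) * m⌋₊ < m := by
      intro x
      rw [Nat.floor_lt (mul_nonneg (Int.fract_nonneg _) hmR.le)]
      calc Int.fract (α * x) * m < 1 * m :=
        mul_lt_mul_of_pos_right (Int.fract_lt_one _) hmR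
        _ = m := one_mul _
    have key : ∀ x y : ℤ, (distGraph {k : ℕ | ∃ j, 1 ≤ j ∧ n j = k}).Adj x y →
        ⌊Int.fract (α * x) * m⌋₊ ≠ ⌊Int.fract (α * y) * m⌋₊ := by
      intro x y hadj hEq
      obtain ⟨hxy, j, hj1, hnj⟩ := hadj
      -- step 1: fract values are close
      have h1 : (⌊Int.fract (α * x) * m⌋₊ : ℝ) ≤ Int.fract (α * x) * m :=
        Nat.floor_le (mul_nonneg (Int.fract_nonneg _) hmR.le)
      have h2 : Int.fract (α * x) * m < ⌊Int.fract (α * x) * m⌋₊ + 1 :=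
        Nat.lt_floor_add_one _
      have h3 : (⌊Int.fract (α * y) * m⌋₊ : ℝ) ≤ Int.fract (α * y) * m :=
        Nat.floor_le (mul_nonneg (Int.fract_nonneg _) hmR.le)
      have h4 : Int.fract (α * y) * m < ⌊Int.fract (α * y) * m⌋₊ + 1 :=
        Nat.lt_floor_add_one _
      rw [hEq] at h1 h2
      have e1 : |Int.fract (α * x) * m - Int.fract (α * y) * m|
          = |Int.fract (α * x) - Int.fract (α * y)| * m := by
        rw [show Int.fract (α * ↑x) * ↑m - Int.fract (α * ↑y) * ↑m
            = (Int.fract (α * ↑x) - Int.fract (α * ↑y)) * ↑m by ring, abs_mul,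
          abs_of_pos hmR]
      have h5 : |Int.fract (α * x) - Int.fract (α * y)| * m < 1 := by
        rw [← e1, abs_lt]
        constructor <;> linarith
      have hlt2 : |Int.fract (α * x) - Int.fract (α * y)| < 1/m := by
        rw [lt_div_iff₀ hmR]
        exact h5
      have hclose : |Int.fract (α * x) - Int.fract (α * y)| < δ :=
        lt_of_lt_of_le hlt2 hminv
      -- step 2: rewrite via floors
      set q : ℤ := ⌊α * (x:ℝ)⌋ - ⌊α * (y:ℝ)⌋ with hq
      have hfr : Int.fract (α * x) - Int.fract (α * y)
          = α * ((x:ℝ) - (y:ℝ)) - (q:ℝ) := by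
        rw [hq]
        unfold Int.fract
        push_cast
        ring
      rw [hfr] at hclose
      -- step 3: case on the sign of x - y
      rcases Int.natAbs_eq (x - y) with hcase | hcase
      · have hxyR : (x:ℝ) - (y:ℝ) = (n j : ℝ) := by
          have h7 : ((x - y : ℤ) : ℝ) = (((x - y).natAbs : ℤ) : ℝ) := by
            exact_mod_cast congrArg (Int.cast : ℤ → ℝ) hcase
          rw [← hnj] at h7
          push_cast at h7
          linarith
        rw [hxyR] at hclose
        have hcontr := hα j hj1 q
        linarith [abs_nonneg (α * (n j : ℝ) - (q:ℝ))]
      · have hxyR : (x:ℝ) - (y:ℝ) = -(n j : ℝ) := by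
          have h7 : ((x - y : ℤ) : ℝ) = ((-(((x - y).natAbs) : ℤ)) : ℝ) := by
            exact_mod_cast congrArg (Int.cast : ℤ → ℝ) hcase
          rw [← hnj] at h7
          push_cast at h7
          linarith
        have h8 : α * ((x:ℝ) - (y:ℝ)) - (q:ℝ) = -(α * (n j : ℝ) - ((-q : ℤ) : ℝ)) := by
          rw [hxyR]
          push_cast
          ring
        rw [h8, abs_neg] at hclose
        have hcontr := hα j hj1 (-q)
        linarith
    exact ⟨SimpleGraph.Coloring.mk (fun x => ⟨⌊Int.fract (α * x) * m⌋₊, hbound x⟩)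
      (fun {x y} hadj heq => key x y hadj (congrArg Fin.val heq))⟩
end

section
/- Let M ≥ 4 be an integer and let (n_j)_{j≥1} be a strictly increasing sequence of positive integers satisfying n_{j+M} > 2·n_j for all j ≥ 1. Then the chromatic number of the distance graph G(S) with S = {n_j : j ≥ 1} is at most ⌈240·M·log₂ M⌉. -/
attribute [local instance] Classical.propDecidable

def lacGood (N K s a : ℕ) : Prop :=
  N ≤ K * (a * s % N) ∧ K * (a * s % N + s) ≤ (K - 1) * N

noncomputable def lacA (S : Set ℕ) (K c : ℕ) : ℕ → Finset ℕ
  | 0 => Finset.range (2 ^ c)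
  | t + 1 =>
      ((lacA S K c t).biUnion fun a => {2 * a, 2 * a + 1}).filter
        fun a => ∀ s ∈ S, 2 ^ t ≤ s → s < 2 ^ (t + 1) → lacGood (2 ^ (t + 1 + c)) K s a

lemma lacA_subset_range (S : Set ℕ) (K c : ℕ) : ∀ t, lacA S K c t ⊆ Finset.range (2 ^ (t + c)) := by
  intro t
  induction t with
  | zero => simp [lacA]
  | succ t ih =>
    intro a ha
    rw [lacA, Finset.mem_filter] at ha
    obtain ⟨ha, -⟩ := ha
    rw [Finset.mem_biUnion] at ha
    obtain ⟨b, hb, hab⟩ := ha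
    have hb' := ih hb
    rw [Finset.mem_range] at hb' ⊢
    simp only [Finset.mem_insert, Finset.mem_singleton] at hab
    have : 2 ^ (t + 1 + c) = 2 * 2 ^ (t + c) := by ring
    rcases hab with rfl | rfl <;> omega

lemma lacA_parent (S : Set ℕ) (K c : ℕ) (t : ℕ) {a : ℕ} (ha : a ∈ lacA S K c (t + 1)) :
    a / 2 ∈ lacA S K c t := by
  rw [lacA, Finset.mem_filter] at ha
  obtain ⟨ha, -⟩ := ha
  rw [Finset.mem_biUnion] at ha
  obtain ⟨b, hb, hab⟩ := ha
  simp only [Finset.mem_insert, Finset.mem_singleton] at hab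
  rcases hab with rfl | rfl <;> simpa [Nat.mul_div_cancel_left, Nat.mul_add_div] using hb

lemma lacA_ancestor (S : Set ℕ) (K c : ℕ) : ∀ (j t : ℕ) {a : ℕ}, a ∈ lacA S K c (t + j) →
    a / 2 ^ j ∈ lacA S K c t := by
  intro j
  induction j with
  | zero => intro t a ha; simpa using ha
  | succ j ih =>
    intro t a ha
    have h1 : a / 2 ∈ lacA S K c (t + j) := lacA_parent _ _ _ _ ha
    have := ih _ h1
    rwa [Nat.div_div_eq_div_mul, ← pow_succ'] at this

lemma lacA_good (S : Set ℕ) (K c : ℕ) (t : ℕ) {a : ℕ} (ha : a ∈ lacA S K c (t + 1)) :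
    ∀ s ∈ S, 2 ^ t ≤ s → s < 2 ^ (t + 1) → lacGood (2 ^ (t + 1 + c)) K s a := by
  classical
  rw [lacA, Finset.mem_filter] at ha
  exact fun s hs h1 h2 => ha.2 s hs h1 h2

lemma add_div_le (x y N : ℕ) (hN : 0 < N) : (x + y) / N ≤ x / N + y / N + 1 := by
  have hx := Nat.div_add_mod x N
  have hx2 : x % N < N := Nat.mod_lt x hN
  have hy := Nat.div_add_mod y N
  have hy2 : y % N < N := Nat.mod_lt y hN
  have : (x + y) / N < x / N + y / N + 2 := by
    rw [Nat.div_lt_iff_lt_mul hN]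
    nlinarith
  omega

lemma count_window (N s w h A0 R : ℕ) (hs : 1 ≤ s) (hN : 0 < N) (hh : 1 ≤ h)
    (hR : (R - 1) * s < 2 * N) :
    ((Finset.Ico A0 (A0 + R)).filter fun a => (a * s + w) % N < h).card ≤
      3 * ((h - 1) / s + 1) := by
  obtain ⟨q, hq⟩ : ∃ q, q = (h - 1) / s := ⟨_, rfl⟩
  rw [← hq]
  set X := (Finset.Ico A0 (A0 + R)).filter fun a => (a * s + w) % N < h with hX
  set k0 := (A0 * s + w) / N with hk0
  have cover : X ⊆ (Finset.Icc k0 (k0 + 2)).biUnion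
      (fun k => X.filter (fun a => (a * s + w) / N = k)) := by
    intro a ha
    rw [Finset.mem_biUnion]
    refine ⟨(a * s + w) / N, ?_, by simp [ha]⟩
    rw [Finset.mem_Icc]
    have haX := ha
    rw [hX, Finset.mem_filter, Finset.mem_Ico] at haX
    constructor
    · exact Nat.div_le_div_right (by nlinarith [haX.1.1])
    · have hle : a ≤ A0 + R - 1 := by omega
      have : a * s + w ≤ (A0 * s + w) + (R - 1) * s := by
        have h2 : a * s ≤ (A0 + R - 1) * s := Nat.mul_le_mul_right s hle
        have h3 : (A0 + R - 1) * s = A0 * s + (R - 1) * s := by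
          have h4 : A0 + R - 1 = A0 + (R - 1) := by omega
          rw [h4, Nat.add_mul]
        omega
      calc (a * s + w) / N ≤ ((A0 * s + w) + (R - 1) * s) / N := Nat.div_le_div_right this
        _ ≤ (A0 * s + w) / N + ((R - 1) * s) / N + 1 := add_div_le _ _ _ hN
        _ ≤ k0 + 2 := by
            have h5 : ((R - 1) * s) / N ≤ 1 := by
              rw [Nat.div_le_iff_le_mul_add_pred hN]
              omega
            omega
  have percard : ∀ k, (X.filter (fun a => (a * s + w) / N = k)).card ≤ q + 1 := by
    intro k
    set Y := X.filter (fun a => (a * s + w) / N = k) with hY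
    rcases Finset.eq_empty_or_nonempty Y with he | hne
    · simp [he]
    · set a0 := Y.min' hne with ha0
      have ha0Y : a0 ∈ Y := Y.min'_mem hne
      have hwin : ∀ b ∈ Y, k * N ≤ b * s + w ∧ b * s + w < k * N + h := by
        intro b hb
        rw [hY, Finset.mem_filter] at hb
        obtain ⟨hbX, hbk⟩ := hb
        rw [hX, Finset.mem_filter] at hbX
        have hmod := hbX.2
        have hdm := Nat.div_add_mod (b * s + w) N
        rw [hbk] at hdm
        have hcomm : k * N = N * k := Nat.mul_comm k N
        constructor <;> omega
      have hsub : Y ⊆ Finset.Icc a0 (a0 + q) := by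
        intro a ha
        rw [Finset.mem_Icc]
        have hge : a0 ≤ a := Y.min'_le a ha
        refine ⟨hge, ?_⟩
        obtain ⟨h1, h2⟩ := hwin a ha
        obtain ⟨h3, h4⟩ := hwin a0 ha0Y
        have hdiff : (a - a0) * s ≤ h - 1 := by
          have h5 : (a - a0) * s = a * s - a0 * s := by rw [Nat.sub_mul]
          omega
        have h6 : a - a0 ≤ q := by
          rw [hq, Nat.le_div_iff_mul_le hs]
          exact hdiff
        omega
      calc Y.card ≤ (Finset.Icc a0 (a0 + q)).card := Finset.card_le_card hsub
        _ = q + 1 := by rw [Nat.card_Icc]; omega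
  calc X.card ≤ ((Finset.Icc k0 (k0 + 2)).biUnion
      (fun k => X.filter (fun a => (a * s + w) / N = k))).card := Finset.card_le_card cover
    _ ≤ ∑ k ∈ Finset.Icc k0 (k0 + 2), (X.filter (fun a => (a * s + w) / N = k)).card :=
        Finset.card_biUnion_le
    _ ≤ (Finset.Icc k0 (k0 + 2)).card * (q + 1) := by
        apply Finset.sum_le_card_nsmul
        intro k _
        exact percard k
    _ ≤ 3 * (q + 1) := by
        rw [Nat.card_Icc]
        have : k0 + 2 + 1 - k0 = 3 := by omega
        rw [this]

lemma two_mul_div_le (x d : ℕ) (hd : 0 < d) : 2 * x / d ≤ 2 * (x / d) + 1 := by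
  have h1 := Nat.div_add_mod x d
  have h2 : x % d < d := Nat.mod_lt x hd
  have : 2 * x / d < 2 * (x / d) + 2 := by
    rw [Nat.div_lt_iff_lt_mul hd]
    nlinarith
  omega

lemma bad_to_window (N K s a : ℕ) (hK : 4 ≤ K) (hs : 1 ≤ s) (hsN : s + 2 ≤ N / 2)
    (hN : 0 < N) (hbad : ¬ lacGood N K s a) :
    (a * s + (N / K + 1 + s)) % N < 2 * (N / K) + s + 2 := by
  have hK0 : 0 < K := by omega
  obtain ⟨u, hu⟩ : ∃ u, N / K = u := ⟨_, rfl⟩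
  obtain ⟨m, hm⟩ : ∃ m, a * s % N = m := ⟨_, rfl⟩
  rw [hu]
  have hmN : m < N := hm ▸ Nat.mod_lt _ hN
  have hdu : K * u + N % K = N := by rw [← hu]; exact Nat.div_add_mod N K
  have hrK : N % K < K := Nat.mod_lt _ hK0
  have hu4 : u ≤ N / 4 := hu ▸ Nat.div_le_div_left hK (by omega)
  have h24 : 2 * (N / 4) ≤ N / 2 := by omega
  have hN2 : N / 2 ≤ N := Nat.div_le_self _ _
  have hhN : 2 * u + s + 2 ≤ N := by omega
  have hwN : u + 1 + s < N := by omega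
  have hmod : (a * s + (u + 1 + s)) % N = (m + (u + 1 + s)) % N := by
    rw [Nat.add_mod, hm, Nat.mod_eq_of_lt hwN]
  rw [lacGood, not_and_or] at hbad
  push_neg at hbad
  rw [hm] at hbad
  rcases hbad with hc | hc
  · -- lower window: K * m < N
    have hmu : m ≤ u := by
      rw [← hu, Nat.le_div_iff_mul_le hK0, mul_comm]
      omega
    have hlt : m + (u + 1 + s) < N := by omega
    rw [hmod, Nat.mod_eq_of_lt hlt]
    omega
  · -- upper window: (K-1)*N < K*(m+s)
    have hsub : (K - 1) * N = K * N - N := Nat.sub_one_mul K N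
    have hNKN : N ≤ K * N := Nat.le_mul_of_pos_left N hK0
    have hma : K * (m + s) = K * m + K * s := by ring
    have hA : K * N < K * m + K * s + N := by omega
    have hB : N < K * u + K := by omega
    have hgt : N < m + (u + 1 + s) := by
      by_contra hle
      push_neg at hle
      have h5 : K * (m + (u + 1 + s)) ≤ K * N := Nat.mul_le_mul_left K hle
      have P2 : K * (m + (u + 1 + s)) = K * m + K * u + K + K * s := by ring
      omega
    rw [hmod, Nat.mod_eq_sub_mod (by omega : N ≤ m + (u + 1 + s)),
      Nat.mod_eq_of_lt (by omega : m + (u + 1 + s) - N < N)]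
    omega

lemma count_bad_block (K c t s b : ℕ) (hK : 1920 ≤ K) (hc : 32 * K ≤ 2 ^ c)
    (hs1 : 2 ^ t ≤ s) (hs2 : s < 2 ^ (t + 1)) :
    ((Finset.Ico (b * 2 ^ (c + 1)) (b * 2 ^ (c + 1) + 2 ^ (c + 1))).filter
        fun a => ¬ lacGood (2 ^ (t + 1 + c)) K s a).card ≤ 6 * (2 ^ (c + 1) / K) + 15 := by
  have hs : 1 ≤ s := le_trans (Nat.one_le_two_pow) hs1
  have hc2 : 2 ≤ c := by
    by_contra hlt
    push_neg at hlt
    interval_cases c <;> omega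
  set N := 2 ^ (t + 1 + c) with hN
  have hN0 : 0 < N := Nat.pow_pos (by norm_num)
  have hN2 : N / 2 = 2 ^ (t + c) := by
    rw [hN, show t + 1 + c = (t + c) + 1 by omega, pow_succ, Nat.mul_div_cancel _ (by norm_num)]
  have hsN : s + 2 ≤ N / 2 := by
    rw [hN2]
    have h1 : s + 2 ≤ 2 ^ (t + 1) + 1 := by omega
    have h2 : (2:ℕ) ^ (t + 1) + 1 ≤ 2 ^ (t + 2) := by
      have := Nat.one_le_two_pow (n := t + 1)
      rw [show t + 2 = (t + 1) + 1 by omega, pow_succ]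
      omega
    have h3 : (2:ℕ) ^ (t + 2) ≤ 2 ^ (t + c) := Nat.pow_le_pow_right (by norm_num) (by omega)
    omega
  have hsubset : ((Finset.Ico (b * 2 ^ (c + 1)) (b * 2 ^ (c + 1) + 2 ^ (c + 1))).filter
        fun a => ¬ lacGood N K s a) ⊆
      ((Finset.Ico (b * 2 ^ (c + 1)) (b * 2 ^ (c + 1) + 2 ^ (c + 1))).filter
        fun a => (a * s + (N / K + 1 + s)) % N < 2 * (N / K) + s + 2) := by
    intro a ha
    rw [Finset.mem_filter] at ha ⊢
    exact ⟨ha.1, bad_to_window N K s a (by omega) hs hsN hN0 ha.2⟩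
  have hR : (2 ^ (c + 1) - 1) * s < 2 * N := by
    have e : (2:ℕ) ^ (c + 1) * 2 ^ (t + 1) = 2 * N := by
      rw [hN, ← pow_add, ← pow_succ']
      congr 1
      omega
    calc (2 ^ (c + 1) - 1) * s ≤ 2 ^ (c + 1) * s := by
          apply Nat.mul_le_mul_right
          omega
      _ < 2 ^ (c + 1) * 2 ^ (t + 1) := by
          exact mul_lt_mul_of_pos_left hs2 (Nat.pow_pos (by norm_num))
      _ = 2 * N := e
  have hcw := count_window N s (N / K + 1 + s) (2 * (N / K) + s + 2)
    (b * 2 ^ (c + 1)) (2 ^ (c + 1)) hs hN0 (by omega) hR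
  have hq : (2 * (N / K) + s + 2 - 1) / s ≤ 2 * (2 ^ (c + 1) / K) + 4 := by
    have e1 : 2 * (N / K) + s + 2 - 1 = 2 * (N / K) + (s + 1) := by omega
    rw [e1]
    have e2 : (2 * (N / K) + (s + 1)) / s ≤ (2 * (N / K)) / s + (s + 1) / s + 1 :=
      add_div_le _ _ _ hs
    have e3 : (s + 1) / s ≤ 2 := by
      rw [Nat.div_le_iff_le_mul_add_pred (by omega)]
      omega
    have e4 : (2 * (N / K)) / s ≤ (2 * (N / K)) / 2 ^ t := Nat.div_le_div_left hs1
      (Nat.pow_pos (by norm_num))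
    have e5 : (2 * (N / K)) / 2 ^ t ≤ 2 * ((N / K) / 2 ^ t) + 1 := two_mul_div_le _ _
      (Nat.pow_pos (by norm_num))
    have e6 : (N / K) / 2 ^ t = 2 ^ (c + 1) / K := by
      rw [Nat.div_div_eq_div_mul, mul_comm K, ← Nat.div_div_eq_div_mul]
      congr 1
      rw [hN, show t + 1 + c = t + (c + 1) by omega, pow_add]
      exact Nat.mul_div_cancel_left _ (Nat.pow_pos (by norm_num))
    rw [e6] at e5
    omega
  calc _ ≤ _ := Finset.card_le_card hsubset
    _ ≤ 3 * ((2 * (N / K) + s + 2 - 1) / s + 1) := hcw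
    _ ≤ 6 * (2 ^ (c + 1) / K) + 15 := by omega

lemma int_bernoulli (m : ℕ) : ∀ n, n ≤ m → m ^ n * (m - n) ≤ (m - 1) ^ n * m := by
  intro n
  induction n with
  | zero => intro _; simp
  | succ n ih =>
    intro hn
    have ihm := ih (by omega)
    obtain ⟨d, hd⟩ : ∃ d, m = n + 1 + d := ⟨m - (n + 1), by omega⟩
    subst hd
    have e1 : n + 1 + d - n = d + 1 := by omega
    have e2 : n + 1 + d - (n + 1) = d := by omega
    have e3 : n + 1 + d - 1 = n + d := by omega
    rw [e1] at ihm
    rw [e2, e3]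
    rw [e3] at ihm
    have key : (n + 1 + d) * d ≤ (d + 1) * (n + d) := by nlinarith
    calc (n + 1 + d) ^ (n + 1) * d = (n + 1 + d) ^ n * ((n + 1 + d) * d) := by ring
      _ ≤ (n + 1 + d) ^ n * ((d + 1) * (n + d)) := Nat.mul_le_mul_left _ key
      _ = ((n + 1 + d) ^ n * (d + 1)) * (n + d) := by ring
      _ ≤ ((n + d) ^ n * (n + 1 + d)) * (n + d) := Nat.mul_le_mul_right _ ihm
      _ = (n + d) ^ (n + 1) * (n + 1 + d) := by ring

lemma pow_half_bound (D : ℕ) (hD : 14 ≤ D) :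
    ∀ E, E ≤ D + 1 → (2 * D) ^ E ≤ 2 * (2 * D - 1) ^ E := by
  obtain ⟨m, hm1, hm2⟩ : ∃ m, D + 1 ≤ 3 * m ∧ 3 * m ≤ D + 3 := ⟨(D + 3) / 3, by omega, by omega⟩
  have hb := int_bernoulli (2 * D) m (by omega)
  have hcube : ((2 * D) ^ m * (2 * D - m)) ^ 3 ≤ ((2 * D - 1) ^ m * (2 * D)) ^ 3 :=
    Nat.pow_le_pow_left hb 3
  have hstep3 : (2 * D) ^ 3 ≤ 2 * (2 * D - m) ^ 3 := by
    have h1 : 5 * D - 3 ≤ 3 * (2 * D - m) := by omega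
    have h2 : (5 * D - 3) ^ 3 ≤ (3 * (2 * D - m)) ^ 3 := Nat.pow_le_pow_left h1 3
    have h3 : 216 * D ^ 3 ≤ 2 * (5 * D - 3) ^ 3 := by
      obtain ⟨D', rfl⟩ : ∃ D', D = 14 + D' := ⟨D - 14, by omega⟩
      have e : 5 * (14 + D') - 3 = 67 + 5 * D' := by omega
      rw [e]
      have id1 : 2 * (67 + 5 * D') ^ 3 =
          216 * (14 + D') ^ 3 + (34 * D' ^ 3 + 978 * D' ^ 2 + 7662 * D' + 8822) := by ring
      rw [id1]
      exact Nat.le_add_right _ _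
    have h4 : 27 * ((2 * D) ^ 3) ≤ 27 * (2 * (2 * D - m) ^ 3) := by
      calc 27 * ((2 * D) ^ 3) = 216 * D ^ 3 := by ring
        _ ≤ 2 * (5 * D - 3) ^ 3 := h3
        _ ≤ 2 * (3 * (2 * D - m)) ^ 3 := Nat.mul_le_mul_left _ h2
        _ = 27 * (2 * (2 * D - m) ^ 3) := by ring
    omega
  have hmain : (2 * D) ^ (3 * m) ≤ 2 * (2 * D - 1) ^ (3 * m) := by
    have h5 : (2 * D) ^ (3 * m) * (2 * D) ^ 3 ≤ (2 * (2 * D - 1) ^ (3 * m)) * (2 * D) ^ 3 := by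
      calc (2 * D) ^ (3 * m) * (2 * D) ^ 3
          ≤ (2 * D) ^ (3 * m) * (2 * (2 * D - m) ^ 3) := Nat.mul_le_mul_left _ hstep3
        _ = 2 * (((2 * D) ^ m * (2 * D - m)) ^ 3) := by
            rw [mul_pow ((2 * D) ^ m) (2 * D - m) 3, ← pow_mul (2 * D) m 3, mul_comm m 3]; ring
        _ ≤ 2 * (((2 * D - 1) ^ m * (2 * D)) ^ 3) := Nat.mul_le_mul_left _ hcube
        _ = (2 * (2 * D - 1) ^ (3 * m)) * (2 * D) ^ 3 := by
            rw [mul_pow ((2 * D - 1) ^ m) (2 * D) 3, ← pow_mul (2 * D - 1) m 3, mul_comm m 3]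
            ring
    exact Nat.le_of_mul_le_mul_right h5 (by positivity)
  intro E hE
  obtain ⟨F, hF⟩ : ∃ F, 3 * m = E + F := ⟨3 * m - E, by omega⟩
  rw [hF] at hmain
  have h6 : (2 * D) ^ E * (2 * D) ^ F ≤ (2 * (2 * D - 1) ^ E) * (2 * D) ^ F := by
    calc (2 * D) ^ E * (2 * D) ^ F = (2 * D) ^ (E + F) := (pow_add _ _ _).symm
      _ ≤ 2 * (2 * D - 1) ^ (E + F) := hmain
      _ = (2 * (2 * D - 1) ^ E) * (2 * D - 1) ^ F := by rw [pow_add]; ring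
      _ ≤ (2 * (2 * D - 1) ^ E) * (2 * D) ^ F :=
          Nat.mul_le_mul_left _ (Nat.pow_le_pow_left (by omega) F)
  exact Nat.le_of_mul_le_mul_right h6 (by positivity)

lemma lacA_card_step (S : Set ℕ) (K c M : ℕ)
    (hK : 1920 ≤ K) (hc : 32 * K ≤ 2 ^ c) (hNC : 25 * M * (c - 1) ≤ K)
    (hB : ∀ t, ((Finset.Ico (2 ^ t) (2 ^ (t + 1))).filter (· ∈ S)).card ≤ M) :
    ∀ t, (2 * (c - 1) - 1) * (lacA S K c t).card ≤ (c - 1) * (lacA S K c (t + 1)).card := by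
  have hc16 : 16 ≤ c := by
    by_contra hlt
    push_neg at hlt
    have h1 : (2:ℕ) ^ c ≤ 2 ^ 15 := Nat.pow_le_pow_right (by norm_num) (by omega)
    have h2 : (61440:ℕ) ≤ 32 * K := by omega
    norm_num at h1
    omega
  set D := c - 1 with hDdef
  have hD14 : 14 ≤ D := by omega
  have hcD : c = D + 1 := by omega
  set Q := 2 ^ (c + 1) / K with hQdef
  have hQ64 : 64 ≤ Q := by
    rw [hQdef, Nat.le_div_iff_mul_le (by omega)]
    calc 64 * K = 2 * (32 * K) := by ring
      _ ≤ 2 * 2 ^ c := by omega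
      _ = 2 ^ (c + 1) := by rw [pow_succ]; ring
  have hQK : Q * K ≤ 2 ^ (c + 1) := Nat.div_mul_le_self _ _
  have keynum : 2 * (M * (6 * Q + 15) * D) ≤ 2 ^ c := by
    have h1 : 4 * (6 * Q + 15) ≤ 25 * Q := by omega
    have h2 : 25 * M * D ≤ K := hNC
    have h8 : 8 * (M * (6 * Q + 15) * D) ≤ 4 * 2 ^ c := by
      calc 8 * (M * (6 * Q + 15) * D) = (M * D) * (4 * (6 * Q + 15)) * 2 := by ring
        _ ≤ (M * D) * (25 * Q) * 2 := by
            have := Nat.mul_le_mul_left (M * D) h1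
            exact Nat.mul_le_mul_right 2 this
        _ = (25 * M * D) * Q * 2 := by ring
        _ ≤ K * Q * 2 := by
            have := Nat.mul_le_mul_right Q h2
            exact Nat.mul_le_mul_right 2 this
        _ = (Q * K) * 2 := by ring
        _ ≤ 2 ^ (c + 1) * 2 := Nat.mul_le_mul_right 2 hQK
        _ = 4 * 2 ^ c := by rw [pow_succ]; ring
    omega
  intro t
  induction t using Nat.strong_induction_on with
  | _ t ih =>
  set P : ℕ → Prop := fun a => ∀ s ∈ S, 2 ^ t ≤ s → s < 2 ^ (t + 1) →
    lacGood (2 ^ (t + 1 + c)) K s a with hPdef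
  set children := (lacA S K c t).biUnion (fun a => ({2 * a, 2 * a + 1} : Finset ℕ))
    with hchdef
  have hAdef : lacA S K c (t + 1) = children.filter P := by rw [lacA]
  have hchcard : children.card = 2 * (lacA S K c t).card := by
    rw [hchdef, Finset.card_biUnion]
    · rw [Finset.sum_congr rfl (g := fun _ => 2) (fun a _ => by
        rw [Finset.card_insert_of_notMem (by simp), Finset.card_singleton])]
      rw [Finset.sum_const, smul_eq_mul, mul_comm]
    · intro x _ y _ hxy
      rw [Function.onFun, Finset.disjoint_left]
      intro z hz hz'
      simp only [Finset.mem_insert, Finset.mem_singleton] at hz hz'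
      omega
  set bad := children.filter (fun a => ¬ P a) with hbaddef
  have hsplit : (lacA S K c (t + 1)).card + bad.card = 2 * (lacA S K c t).card := by
    rw [hAdef, hbaddef, Finset.card_filter_add_card_filter_not, hchcard]
  -- the ancestor finset
  set Anc := if c ≤ t then lacA S K c (t - c) else Finset.range (2 ^ t) with hAncdef
  have hcover : bad ⊆ Anc.biUnion (fun b =>
      ((Finset.Ico (2 ^ t) (2 ^ (t + 1))).filter (· ∈ S)).biUnion (fun s =>
        (Finset.Ico (b * 2 ^ (c + 1)) (b * 2 ^ (c + 1) + 2 ^ (c + 1))).filter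
          (fun a => ¬ lacGood (2 ^ (t + 1 + c)) K s a))) := by
    intro a ha
    rw [hbaddef, Finset.mem_filter] at ha
    obtain ⟨hach, hnp⟩ := ha
    replace hnp : ¬ (∀ s ∈ S, 2 ^ t ≤ s → s < 2 ^ (t + 1) →
        lacGood (2 ^ (t + 1 + c)) K s a) := hnp
    push_neg at hnp
    obtain ⟨s, hsS, hs1, hs2, hsbad⟩ := hnp
    have hhalf : a / 2 ∈ lacA S K c t := by
      rw [hchdef, Finset.mem_biUnion] at hach
      obtain ⟨a', ha', haa⟩ := hach
      simp only [Finset.mem_insert, Finset.mem_singleton] at haa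
      rcases haa with rfl | rfl <;>
        simpa [Nat.mul_div_cancel_left, Nat.mul_add_div] using ha'
    have hb : a / 2 ^ (c + 1) ∈ Anc := by
      rw [hAncdef]
      split_ifs with hct
      · have := lacA_ancestor S K c c (t - c) (a := a / 2)
        rw [Nat.sub_add_cancel hct] at this
        have h2 := this hhalf
        rwa [Nat.div_div_eq_div_mul, ← pow_succ'] at h2
      · rw [Finset.mem_range]
        have harange := lacA_subset_range S K c t hhalf
        rw [Finset.mem_range] at harange
        rw [Nat.div_lt_iff_lt_mul (by positivity)]
        have he : 2 ^ t * 2 ^ (c + 1) = 2 * 2 ^ (t + c) := by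
          rw [← pow_add, ← pow_succ']
          rfl
        omega
    rw [Finset.mem_biUnion]
    refine ⟨a / 2 ^ (c + 1), hb, ?_⟩
    rw [Finset.mem_biUnion]
    refine ⟨s, by rw [Finset.mem_filter, Finset.mem_Ico]; exact ⟨⟨hs1, hs2⟩, hsS⟩, ?_⟩
    rw [Finset.mem_filter]
    refine ⟨?_, hsbad⟩
    rw [Finset.mem_Ico]
    have hdm := Nat.div_add_mod a (2 ^ (c + 1))
    have hmlt : a % 2 ^ (c + 1) < 2 ^ (c + 1) := Nat.mod_lt _ (by positivity)
    have hco : a / 2 ^ (c + 1) * 2 ^ (c + 1) = 2 ^ (c + 1) * (a / 2 ^ (c + 1)) :=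
      Nat.mul_comm _ _
    omega
  have hbadcard : bad.card ≤ Anc.card * (M * (6 * Q + 15)) := by
    calc bad.card ≤ _ := Finset.card_le_card hcover
      _ ≤ ∑ b ∈ Anc, (((Finset.Ico (2 ^ t) (2 ^ (t + 1))).filter (· ∈ S)).biUnion (fun s =>
            (Finset.Ico (b * 2 ^ (c + 1)) (b * 2 ^ (c + 1) + 2 ^ (c + 1))).filter
              (fun a => ¬ lacGood (2 ^ (t + 1 + c)) K s a))).card := Finset.card_biUnion_le
      _ ≤ Anc.card * (M * (6 * Q + 15)) := by
          apply Finset.sum_le_card_nsmul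
          intro b _
          calc _ ≤ ∑ s ∈ (Finset.Ico (2 ^ t) (2 ^ (t + 1))).filter (· ∈ S),
                ((Finset.Ico (b * 2 ^ (c + 1)) (b * 2 ^ (c + 1) + 2 ^ (c + 1))).filter
                  (fun a => ¬ lacGood (2 ^ (t + 1 + c)) K s a)).card := Finset.card_biUnion_le
            _ ≤ ((Finset.Ico (2 ^ t) (2 ^ (t + 1))).filter (· ∈ S)).card * (6 * Q + 15) := by
                apply Finset.sum_le_card_nsmul
                intro s hs
                rw [Finset.mem_filter, Finset.mem_Ico] at hs
                exact count_bad_block K c t s b hK hc hs.1.1 hs.1.2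
            _ ≤ M * (6 * Q + 15) := Nat.mul_le_mul_right _ (hB t)
  -- chain lemma
  have chainlem : ∀ k u, u + k ≤ t →
      (2 * D - 1) ^ k * (lacA S K c u).card ≤ D ^ k * (lacA S K c (u + k)).card := by
    intro k
    induction k with
    | zero => intro u _; simp
    | succ k ihk =>
      intro u hu
      have h1 := ihk u (by omega)
      have h2 := ih (u + k) (by omega)
      calc (2 * D - 1) ^ (k + 1) * (lacA S K c u).card
          = (2 * D - 1) * ((2 * D - 1) ^ k * (lacA S K c u).card) := by ring
        _ ≤ (2 * D - 1) * (D ^ k * (lacA S K c (u + k)).card) := Nat.mul_le_mul_left _ h1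
        _ = D ^ k * ((2 * D - 1) * (lacA S K c (u + k)).card) := by ring
        _ ≤ D ^ k * (D * (lacA S K c (u + k + 1)).card) := Nat.mul_le_mul_left _ h2
        _ = D ^ (k + 1) * (lacA S K c (u + k + 1)).card := by ring
  -- core bound : D * bad.card ≤ N_t
  have h3 : D * bad.card ≤ (lacA S K c t).card := by
    by_cases hct : c ≤ t
    · have hAncc : Anc = lacA S K c (t - c) := by rw [hAncdef, if_pos hct]
      have hch := chainlem c (t - c) (by omega)
      rw [Nat.sub_add_cancel hct] at hch
      have hph := pow_half_bound D hD14 c (by omega)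
      have hkey2 : (2 * D ^ c) * (D * bad.card) ≤ (2 * D ^ c) * (lacA S K c t).card := by
        calc (2 * D ^ c) * (D * bad.card)
            ≤ (2 * D ^ c) * (D * ((lacA S K c (t - c)).card * (M * (6 * Q + 15)))) := by
              apply Nat.mul_le_mul_left
              apply Nat.mul_le_mul_left
              rw [← hAncc]
              exact hbadcard
          _ = (2 * (M * (6 * Q + 15) * D)) * (D ^ c * (lacA S K c (t - c)).card) := by ring
          _ ≤ 2 ^ c * (D ^ c * (lacA S K c (t - c)).card) := Nat.mul_le_mul_right _ keynum
          _ = (2 * D) ^ c * (lacA S K c (t - c)).card := by rw [mul_pow]; ring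
          _ ≤ (2 * (2 * D - 1) ^ c) * (lacA S K c (t - c)).card := Nat.mul_le_mul_right _ hph
          _ = 2 * ((2 * D - 1) ^ c * (lacA S K c (t - c)).card) := by ring
          _ ≤ 2 * (D ^ c * (lacA S K c t).card) := Nat.mul_le_mul_left _ hch
          _ = (2 * D ^ c) * (lacA S K c t).card := by ring
      exact Nat.le_of_mul_le_mul_left hkey2 (by positivity)
    · push_neg at hct
      have hAncc : Anc = Finset.range (2 ^ t) := by rw [hAncdef, if_neg (by omega)]
      have hAnccard : Anc.card = 2 ^ t := by rw [hAncc, Finset.card_range]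
      have hch := chainlem t 0 (by omega)
      rw [Nat.zero_add] at hch
      have hN0 : (lacA S K c 0).card = 2 ^ c := by rw [lacA, Finset.card_range]
      rw [hN0] at hch
      have hph := pow_half_bound D hD14 t (by omega)
      have hkey2 : (2 * D ^ t) * (D * bad.card) ≤ (2 * D ^ t) * (lacA S K c t).card := by
        calc (2 * D ^ t) * (D * bad.card)
            ≤ (2 * D ^ t) * (D * (2 ^ t * (M * (6 * Q + 15)))) := by
              apply Nat.mul_le_mul_left
              apply Nat.mul_le_mul_left
              rw [← hAnccard]
              exact hbadcard
          _ = (2 * (M * (6 * Q + 15) * D)) * (D ^ t * 2 ^ t) := by ring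
          _ ≤ 2 ^ c * (D ^ t * 2 ^ t) := Nat.mul_le_mul_right _ keynum
          _ = (2 * D) ^ t * 2 ^ c := by rw [mul_pow]; ring
          _ ≤ (2 * (2 * D - 1) ^ t) * 2 ^ c := Nat.mul_le_mul_right _ hph
          _ = 2 * ((2 * D - 1) ^ t * 2 ^ c) := by ring
          _ ≤ 2 * (D ^ t * (lacA S K c t).card) := Nat.mul_le_mul_left _ hch
          _ = (2 * D ^ t) * (lacA S K c t).card := by ring
      exact Nat.le_of_mul_le_mul_left hkey2 (by positivity)
  -- conclude
  have hE2 : (2 * D - 1) + 1 = 2 * D := by omega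
  have h1 : (2 * D - 1) * (lacA S K c t).card + (lacA S K c t).card
      = 2 * (D * (lacA S K c t).card) := by
    rw [← add_one_mul, hE2]; ring
  have h2 : D * (lacA S K c (t + 1)).card + D * bad.card = 2 * (D * (lacA S K c t).card) := by
    rw [← Nat.mul_add, hsplit]; ring
  omega

lemma lacA_card_pos (S : Set ℕ) (K c M : ℕ)
    (hK : 1920 ≤ K) (hc : 32 * K ≤ 2 ^ c) (hNC : 25 * M * (c - 1) ≤ K)
    (hB : ∀ t, ((Finset.Ico (2 ^ t) (2 ^ (t + 1))).filter (· ∈ S)).card ≤ M) :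
    ∀ t, 0 < (lacA S K c t).card := by
  have hc16 : 16 ≤ c := by
    by_contra hlt
    push_neg at hlt
    have h1 : (2:ℕ) ^ c ≤ 2 ^ 15 := Nat.pow_le_pow_right (by norm_num) (by omega)
    have h2 : (61440:ℕ) ≤ 32 * K := by omega
    norm_num at h1
    omega
  intro t
  induction t with
  | zero =>
    rw [lacA, Finset.card_range]
    positivity
  | succ t ihp =>
    have hstep := lacA_card_step S K c M hK hc hNC hB t
    have h2 : 0 < (c - 1) * (lacA S K c (t + 1)).card :=
      lt_of_lt_of_le (Nat.mul_pos (by omega) ihp) hstep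
    by_contra hz
    push_neg at hz
    rw [Nat.le_zero] at hz
    rw [hz, Nat.mul_zero] at h2
    exact lt_irrefl 0 h2

lemma good_real (N K s a : ℕ) (α : ℝ) (hK : 1 ≤ K) (hN : 0 < N) (hg : lacGood N K s a)
    (hα1 : (a : ℝ) / N ≤ α) (hα2 : α ≤ ((a : ℝ) + 1) / N) (z : ℤ) :
    1 / (K : ℝ) ≤ |α * s - z| := by
  obtain ⟨hg1, hg2⟩ := hg
  set q := a * s / N with hq
  set m := a * s % N with hm
  have hdm : (N : ℝ) * q + m = (a : ℝ) * s := by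
    have h0 := congrArg (Nat.cast : ℕ → ℝ) (Nat.div_add_mod (a * s) N)
    push_cast at h0
    linarith [h0]
  have hNR : (0 : ℝ) < N := by exact_mod_cast hN
  have hKR : (0 : ℝ) < K := by exact_mod_cast hK
  have hg1R : (N : ℝ) ≤ K * m := by exact_mod_cast hg1
  have hg2R : (K : ℝ) * (m + s) ≤ ((K : ℝ) - 1) * N := by
    have h0 : ((K * (m + s) : ℕ) : ℝ) ≤ (((K - 1) * N : ℕ) : ℝ) := by exact_mod_cast hg2
    push_cast [Nat.cast_sub hK] at h0
    linarith [h0]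
  have hsnn : (0 : ℝ) ≤ (s : ℝ) := by positivity
  have hlow : (q : ℝ) + 1 / K ≤ α * s := by
    have h1 : (a : ℝ) / N * s ≤ α * s := mul_le_mul_of_nonneg_right hα1 hsnn
    have h2 : (a : ℝ) / N * s = q + m / N := by
      field_simp
      linarith [hdm]
    have h3 : 1 / (K : ℝ) ≤ m / N := by
      rw [div_le_div_iff₀ hKR hNR]
      nlinarith
    linarith
  have hhigh : α * s ≤ (q : ℝ) + 1 - 1 / K := by
    have h1 : α * s ≤ ((a : ℝ) + 1) / N * s := mul_le_mul_of_nonneg_right hα2 hsnn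
    have h2 : ((a : ℝ) + 1) / N * s = q + (m + s) / N := by
      field_simp
      linarith [hdm]
    have h3 : ((m : ℝ) + s) / N ≤ 1 - 1 / K := by
      rw [div_le_iff₀ hNR]
      have : (1 - 1 / (K : ℝ)) * N = ((K : ℝ) - 1) * N / K := by
        field_simp
      rw [this, le_div_iff₀ hKR]
      nlinarith
    linarith
  have h1K : 0 < 1 / (K : ℝ) := by positivity
  rcases le_or_gt (z : ℝ) (q : ℝ) with hz | hz
  · rw [abs_of_nonneg (by linarith)]
    linarith
  · have hz' : (q : ℝ) + 1 ≤ z := by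
      have h5 : ((q : ℤ)) < z := by exact_mod_cast hz
      have h6 : ((q : ℤ)) + 1 ≤ z := by omega
      exact_mod_cast h6
    rw [abs_of_nonpos (by linarith)]
    linarith

noncomputable def lacE (S : Set ℕ) (K c t : ℕ) : Set ℝ :=
  ⋃ a ∈ lacA S K c t, Set.Icc ((a : ℝ) / 2 ^ (t + c)) (((a : ℝ) + 1) / 2 ^ (t + c))

lemma lacE_anti (S : Set ℕ) (K c t : ℕ) : lacE S K c (t + 1) ⊆ lacE S K c t := by
  intro α hα
  rw [lacE, Set.mem_iUnion₂] at hα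
  obtain ⟨a, ha, hIcc⟩ := hα
  rw [lacE, Set.mem_iUnion₂]
  refine ⟨a / 2, lacA_parent S K c t ha, ?_⟩
  rw [Set.mem_Icc] at hIcc ⊢
  have hp : (0:ℝ) < 2 ^ (t + c) := by positivity
  have hp1 : (0:ℝ) < 2 ^ (t + 1 + c) := by positivity
  have hfl1 : ((a / 2 : ℕ) : ℝ) * 2 ≤ (a : ℝ) := by
    have : a / 2 * 2 ≤ a := by omega
    exact_mod_cast this
  have hfl2 : (a : ℝ) + 1 ≤ (((a / 2 : ℕ) : ℝ) + 1) * 2 := by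
    have : a + 1 ≤ (a / 2 + 1) * 2 := by omega
    exact_mod_cast this
  have he : (2:ℝ) ^ (t + 1 + c) = 2 ^ (t + c) * 2 := by
    rw [← pow_succ]
    congr 1
    omega
  constructor
  · have h1 : ((a / 2 : ℕ) : ℝ) / 2 ^ (t + c) ≤ (a : ℝ) / 2 ^ (t + 1 + c) := by
      rw [div_le_div_iff₀ hp hp1, he]
      nlinarith
    exact h1.trans hIcc.1
  · have h2 : ((a : ℝ) + 1) / 2 ^ (t + 1 + c) ≤ (((a / 2 : ℕ) : ℝ) + 1) / 2 ^ (t + c) := by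
      rw [div_le_div_iff₀ hp1 hp, he]
      nlinarith
    exact hIcc.2.trans h2

lemma lacE_exists_alpha (S : Set ℕ) (K c : ℕ)
    (hpos : ∀ t, 0 < (lacA S K c t).card) :
    ∃ α : ℝ, ∀ t, α ∈ lacE S K c t := by
  have hne : ∀ t, (lacE S K c t).Nonempty := by
    intro t
    obtain ⟨a, ha⟩ := Finset.card_pos.mp (hpos t)
    refine ⟨(a : ℝ) / 2 ^ (t + c), ?_⟩
    rw [lacE, Set.mem_iUnion₂]
    refine ⟨a, ha, ?_⟩
    rw [Set.mem_Icc]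
    have hp : (0:ℝ) < 2 ^ (t + c) := by positivity
    constructor
    · exact le_refl _
    · rw [div_le_div_iff₀ hp hp]
      nlinarith
  have hclosed : ∀ t, IsClosed (lacE S K c t) := fun t =>
    isClosed_biUnion_finset (fun a _ => isClosed_Icc)
  have hcomp : IsCompact (lacE S K c 0) :=
    (lacA S K c 0).finite_toSet.isCompact_biUnion (fun a _ => isCompact_Icc)
  have hint := IsCompact.nonempty_iInter_of_sequence_nonempty_isCompact_isClosed
    (lacE S K c) (fun t => lacE_anti S K c t) hne hcomp hclosed
  obtain ⟨α, hα⟩ := hint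
  rw [Set.mem_iInter] at hα
  exact ⟨α, hα⟩

lemma alpha_property (S : Set ℕ) (K c : ℕ) (hK : 1 ≤ K) (α : ℝ)
    (hα : ∀ t, α ∈ lacE S K c t) :
    ∀ s ∈ S, 1 ≤ s → ∀ z : ℤ, 1 / (K : ℝ) ≤ |α * s - z| := by
  intro s hsS hs1 z
  set t := Nat.log 2 s with ht
  have h1 : 2 ^ t ≤ s := Nat.pow_log_le_self 2 (by omega)
  have h2 : s < 2 ^ (t + 1) := Nat.lt_pow_succ_log_self (by norm_num) s
  have hmem := hα (t + 1)
  rw [lacE, Set.mem_iUnion₂] at hmem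
  obtain ⟨a, ha, hIcc⟩ := hmem
  have hg := lacA_good S K c t ha s hsS h1 h2
  rw [Set.mem_Icc] at hIcc
  have hcast : (((2:ℕ) ^ (t + 1 + c) : ℕ) : ℝ) = (2:ℝ) ^ (t + 1 + c) := by push_cast; ring
  have hα1 := hIcc.1
  have hα2 := hIcc.2
  rw [← hcast] at hα1 hα2
  exact good_real (2 ^ (t + 1 + c)) K s a α hK (by positivity) hg hα1 hα2 z

lemma lemA : ∀ y, 6 ≤ y → 9 * y + 107 ≤ 8 * 2 ^ y := by
  intro y hy
  induction y with
  | zero => omega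
  | succ y ih =>
    rcases Nat.lt_or_ge y 6 with h | h
    · have hy5 : y = 5 := by omega
      subst hy5
      norm_num
    · have h1 := ih (by omega)
      have h2 : (64:ℕ) ≤ 2 ^ y := by
        calc (64:ℕ) = 2 ^ 6 := by norm_num
          _ ≤ 2 ^ y := Nat.pow_le_pow_right (by norm_num) h
      have h3 : (2:ℕ) ^ (y + 1) = 2 * 2 ^ y := by rw [pow_succ]; ring
      omega

lemma numeric_NC (M K : ℕ) (hM : 4 ≤ M) (hK480 : 480 * M ≤ K)
    (hKl : 240 * M * Nat.log 2 M ≤ K) :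
    25 * M * (Nat.clog 2 (32 * K) - 1) ≤ K := by
  set l := Nat.log 2 M with hl
  have hM0 : 0 < M := by omega
  have hl2 : 2 ≤ l := by
    rw [hl, Nat.le_log_iff_pow_le (by norm_num) (by omega)]
    omega
  have hlM : M < 2 ^ (l + 1) := Nat.lt_pow_succ_log_self (by norm_num) M
  set e := K / (25 * M) with he
  have h25M : 0 < 25 * M := by omega
  have he19 : 19 ≤ e := by
    rw [he, Nat.le_div_iff_mul_le h25M]
    nlinarith
  have he9l : 9 * l ≤ e := by
    rw [he, Nat.le_div_iff_mul_le h25M]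
    nlinarith [hKl]
  have heK : 25 * M * e ≤ K := by
    rw [he, mul_comm]
    exact Nat.div_mul_le_self _ _
  have hKe : K < 25 * M * (e + 1) := by
    have hdm := Nat.div_add_mod K (25 * M)
    have hmod : K % (25 * M) < 25 * M := Nat.mod_lt _ h25M
    have e1 : 25 * M * (e + 1) = 25 * M * e + 25 * M := by ring
    rw [← he] at hdm
    omega
  set y := e - l - 11 with hydef
  have hy6 : 6 ≤ y := by omega
  have h8e : 8 * e ≤ 9 * y + 99 := by omega
  have hA := lemA y hy6
  have hepow : e + 1 ≤ 2 ^ y := by omega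
  have hexp : 10 + (l + 1) + y = e := by omega
  have hmain : 32 * K ≤ 2 ^ (e + 1) := by
    have h1 : 32 * K < 800 * (M * (e + 1)) := by nlinarith [hKe]
    have h2 : 800 * (M * (e + 1)) ≤ 1024 * (M * (e + 1)) :=
      Nat.mul_le_mul_right _ (by norm_num)
    have h3 : M * (e + 1) ≤ 2 ^ (l + 1) * 2 ^ y := Nat.mul_le_mul (le_of_lt hlM) hepow
    have h4 : 1024 * (M * (e + 1)) ≤ 1024 * (2 ^ (l + 1) * 2 ^ y) :=
      Nat.mul_le_mul_left _ h3
    have h5 : 1024 * ((2:ℕ) ^ (l + 1) * 2 ^ y) = 2 ^ (10 + (l + 1) + y) := by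
      rw [pow_add, pow_add, pow_add]
      norm_num
      ring
    have h6 : (2:ℕ) ^ e ≤ 2 ^ (e + 1) := Nat.pow_le_pow_right (by norm_num) (by omega)
    calc 32 * K ≤ 800 * (M * (e + 1)) := le_of_lt h1
      _ ≤ 1024 * (M * (e + 1)) := h2
      _ ≤ 1024 * (2 ^ (l + 1) * 2 ^ y) := h4
      _ = 2 ^ (10 + (l + 1) + y) := h5
      _ = 2 ^ e := by rw [hexp]
      _ ≤ 2 ^ (e + 1) := h6
  have hclog : Nat.clog 2 (32 * K) ≤ e + 1 := (Nat.clog_le_iff_le_pow (by norm_num)).mpr hmain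
  calc 25 * M * (Nat.clog 2 (32 * K) - 1) ≤ 25 * M * e := Nat.mul_le_mul_left _ (by omega)
    _ ≤ K := heK

/-- Let `M ≥ 4` and let `(n j)` be a strictly increasing sequence of positive integers
with `n (j + M) > 2 * n j` for all `j ≥ 1`. Then the chromatic number of the distance
graph of `S = {n j : j ≥ 1}` is at most `⌈240 * M * log₂ M⌉`. -/
theorem chromatic_number_union_lacunary
    (M : ℕ) (hM : 4 ≤ M)
    (n : ℕ → ℕ) (hpos : ∀ j, 1 ≤ j → 0 < n j)
    (hmono : ∀ j, 1 ≤ j → n j < n (j + 1))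
    (hdouble : ∀ j, 1 ≤ j → 2 * n j < n (j + M)) :
    (distGraph {k : ℕ | ∃ j, 1 ≤ j ∧ n j = k}).chromaticNumber ≤
      (⌈(240 : ℝ) * M * Real.logb 2 M⌉₊ : ℕ∞) := by
  classical
  set S : Set ℕ := {k : ℕ | ∃ j, 1 ≤ j ∧ n j = k} with hSdef
  set K := ⌈(240 : ℝ) * M * Real.logb 2 M⌉₊ with hKdef
  have hMR : (4 : ℝ) ≤ (M : ℝ) := by exact_mod_cast hM
  have hlogb4 : Real.logb 2 4 = 2 := by
    rw [show (4 : ℝ) = 2 ^ (2 : ℕ) by norm_num, Real.logb_pow,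
      Real.logb_self_eq_one (by norm_num : (1:ℝ) < 2)]
    norm_num
  have hlogbM : (2 : ℝ) ≤ Real.logb 2 M := by
    calc (2 : ℝ) = Real.logb 2 4 := hlogb4.symm
      _ ≤ Real.logb 2 M := Real.logb_le_logb_of_le (by norm_num : (1:ℝ) < 2) (by norm_num) hMR
  have hKreal : (240 : ℝ) * M * Real.logb 2 M ≤ (K : ℝ) := Nat.le_ceil _
  have hK480 : 480 * M ≤ K := by
    have h1 : ((480 * M : ℕ) : ℝ) ≤ (K : ℝ) := by
      push_cast
      nlinarith [hKreal, hlogbM, hMR]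
    exact_mod_cast h1
  have hK1920 : 1920 ≤ K := by
    have := Nat.mul_le_mul_left 480 hM
    omega
  have hKl : 240 * M * Nat.log 2 M ≤ K := by
    have hpl : (2 : ℕ) ^ (Nat.log 2 M) ≤ M := Nat.pow_log_le_self 2 (by omega)
    have hlb : ((Nat.log 2 M : ℕ) : ℝ) ≤ Real.logb 2 M := by
      calc ((Nat.log 2 M : ℕ) : ℝ) = Real.logb 2 ((2 : ℝ) ^ (Nat.log 2 M)) := by
            rw [Real.logb_pow, Real.logb_self_eq_one (by norm_num : (1:ℝ) < 2)]
            norm_num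
        _ ≤ Real.logb 2 M := Real.logb_le_logb_of_le (by norm_num : (1:ℝ) < 2) (by positivity)
            (by exact_mod_cast hpl)
    have h1 : ((240 * M * Nat.log 2 M : ℕ) : ℝ) ≤ (K : ℝ) := by
      push_cast
      nlinarith [hKreal, hlb, hMR]
    exact_mod_cast h1
  have hK1 : 1 ≤ K := by omega
  set c := Nat.clog 2 (32 * K) with hcdef
  have hc : 32 * K ≤ 2 ^ c := Nat.le_pow_clog (by norm_num) _
  have hNC : 25 * M * (c - 1) ≤ K := numeric_NC M K hM hK480 hKl
  have hSel : ∀ s ∈ S, 1 ≤ s := by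
    intro s hs
    obtain ⟨j, hj1, hjn⟩ := hs
    have := hpos j hj1
    omega
  have hmono2 : ∀ i k, 1 ≤ i → n i ≤ n (i + k) := by
    intro i k hi
    induction k with
    | zero => simp
    | succ k ih =>
      have h1 := hmono (i + k) (by omega)
      have h2 : i + (k + 1) = (i + k) + 1 := by omega
      rw [h2]
      omega
  have hB : ∀ t, ((Finset.Ico (2 ^ t) (2 ^ (t + 1))).filter (· ∈ S)).card ≤ M := by
    intro t
    set F := (Finset.Ico (2 ^ t) (2 ^ (t + 1))).filter (· ∈ S) with hF
    rcases Finset.eq_empty_or_nonempty F with he | hne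
    · rw [he]
      simp
    · set idx : ℕ → ℕ := fun s => if h : s ∈ S then Classical.choose h else 0 with hidx
      have hidx1 : ∀ s ∈ S, 1 ≤ idx s ∧ n (idx s) = s := by
        intro s hs
        rw [hidx]
        simp only [dif_pos hs]
        exact Classical.choose_spec hs
      have hFS : ∀ s ∈ F, s ∈ S ∧ 2 ^ t ≤ s ∧ s < 2 ^ (t + 1) := by
        intro s hs
        rw [hF, Finset.mem_filter, Finset.mem_Ico] at hs
        exact ⟨hs.2, hs.1.1, hs.1.2⟩
      have hinj : Set.InjOn idx ↑F := by
        intro s1 h1 s2 h2 heq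
        have e1 := (hidx1 s1 (hFS s1 h1).1).2
        have e2 := (hidx1 s2 (hFS s2 h2).1).2
        rw [← e1, ← e2, heq]
      set J := F.image idx with hJ
      have hcardJ : J.card = F.card := Finset.card_image_of_injOn hinj
      have hJne : J.Nonempty := hne.image _
      set j0 := J.min' hJne with hj0
      have hj0J : j0 ∈ J := J.min'_mem hJne
      obtain ⟨s0, hs0F, hs0j⟩ := Finset.mem_image.mp hj0J
      have hs0S := (hFS s0 hs0F).1
      have hj01 : 1 ≤ j0 := by
        rw [← hs0j]
        exact (hidx1 s0 hs0S).1
      have hns0 : n j0 = s0 := by rw [← hs0j]; exact (hidx1 s0 hs0S).2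
      have hsub : J ⊆ Finset.Ico j0 (j0 + M) := by
        intro j hjJ
        rw [Finset.mem_Ico]
        refine ⟨J.min'_le _ hjJ, ?_⟩
        by_contra hge
        push_neg at hge
        obtain ⟨s, hsF, hsj⟩ := Finset.mem_image.mp hjJ
        have hsS := (hFS s hsF).1
        have hns : n j = s := by rw [← hsj]; exact (hidx1 s hsS).2
        have hd := hdouble j0 hj01
        have hm := hmono2 (j0 + M) (j - (j0 + M)) (by omega)
        rw [show j0 + M + (j - (j0 + M)) = j by omega] at hm
        have hl1 : 2 ^ t ≤ s0 := (hFS s0 hs0F).2.1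
        have hl2 : s < 2 ^ (t + 1) := (hFS s hsF).2.2
        have hp2 : (2 : ℕ) ^ (t + 1) = 2 * 2 ^ t := by rw [pow_succ]; ring
        omega
      calc F.card = J.card := hcardJ.symm
        _ ≤ (Finset.Ico j0 (j0 + M)).card := Finset.card_le_card hsub
        _ = M := by rw [Nat.card_Ico]; omega
  have hposA := lacA_card_pos S K c M hK1920 hc hNC hB
  obtain ⟨α, hα⟩ := lacE_exists_alpha S K c hposA
  have hprop := alpha_property S K c hK1 α hα
  have hK0R : (0 : ℝ) < (K : ℝ) := by
    have : (0 : ℕ) < K := by omega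
    exact_mod_cast this
  set f : ℤ → Fin K := fun v => ⟨⌊(K : ℝ) * Int.fract (α * v)⌋₊, by
    rw [Nat.floor_lt (mul_nonneg (by positivity) (Int.fract_nonneg _))]
    calc (K : ℝ) * Int.fract (α * v) < (K : ℝ) * 1 :=
          mul_lt_mul_of_pos_left (Int.fract_lt_one _) hK0R
      _ = (K : ℝ) := mul_one _⟩ with hf
  have hvalid : ∀ {v w : ℤ}, (distGraph S).Adj v w → f v ≠ f w := by
    intro v w hadj heq
    obtain ⟨hvw, hmem⟩ := hadj
    set s := (v - w).natAbs with hs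
    have hs1 : 1 ≤ s := hSel s hmem
    have hfloor : ⌊(K : ℝ) * Int.fract (α * v)⌋₊ = ⌊(K : ℝ) * Int.fract (α * w)⌋₊ := by
      have := congrArg Fin.val heq
      simpa [hf] using this
    have hnn1 : (0 : ℝ) ≤ (K : ℝ) * Int.fract (α * v) :=
      mul_nonneg (le_of_lt hK0R) (Int.fract_nonneg _)
    have hnn2 : (0 : ℝ) ≤ (K : ℝ) * Int.fract (α * w) :=
      mul_nonneg (le_of_lt hK0R) (Int.fract_nonneg _)
    have habs : |(K : ℝ) * Int.fract (α * v) - (K : ℝ) * Int.fract (α * w)| < 1 := by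
      have f1 : ((⌊(K : ℝ) * Int.fract (α * v)⌋₊ : ℕ) : ℝ) ≤ (K : ℝ) * Int.fract (α * v) :=
        Nat.floor_le hnn1
      have f2 : (K : ℝ) * Int.fract (α * v) < ⌊(K : ℝ) * Int.fract (α * v)⌋₊ + 1 :=
        Nat.lt_floor_add_one _
      have f3 : ((⌊(K : ℝ) * Int.fract (α * w)⌋₊ : ℕ) : ℝ) ≤ (K : ℝ) * Int.fract (α * w) :=
        Nat.floor_le hnn2
      have f4 : (K : ℝ) * Int.fract (α * w) < ⌊(K : ℝ) * Int.fract (α * w)⌋₊ + 1 :=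
        Nat.lt_floor_add_one _
      rw [abs_lt]
      rw [hfloor] at f1 f2
      constructor <;> linarith
    have hfr : |Int.fract (α * v) - Int.fract (α * w)| < 1 / (K : ℝ) := by
      rw [lt_div_iff₀ hK0R]
      have e0 : (K : ℝ) * Int.fract (α * v) - (K : ℝ) * Int.fract (α * w) =
          (Int.fract (α * v) - Int.fract (α * w)) * (K : ℝ) := by ring
      rw [e0, abs_mul, abs_of_nonneg (le_of_lt hK0R)] at habs
      exact habs
    set z : ℤ := ⌊α * v⌋ - ⌊α * w⌋ with hz
    have hfr2 : |α * ((v : ℝ) - (w : ℝ)) - (z : ℝ)| < 1 / (K : ℝ) := by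
      have e : α * ((v : ℝ) - (w : ℝ)) - (z : ℝ) =
          Int.fract (α * v) - Int.fract (α * w) := by
        rw [hz]
        rw [Int.fract, Int.fract]
        push_cast
        ring
      rw [e]
      exact hfr
    rcases Int.natAbs_eq (v - w) with hpm | hpm
    · have ecast : (v : ℝ) - (w : ℝ) = (s : ℝ) := by
        have h7 : (v - w : ℤ) = (s : ℤ) := by rw [hs]; exact_mod_cast hpm
        have h8 : ((v - w : ℤ) : ℝ) = ((s : ℤ) : ℝ) := by exact_mod_cast h7
        push_cast at h8
        linarith [h8]
      rw [ecast] at hfr2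
      have := hprop s hmem hs1 z
      linarith
    · have ecast : (v : ℝ) - (w : ℝ) = -(s : ℝ) := by
        have h7 : (v - w : ℤ) = -(s : ℤ) := by rw [hs]; exact_mod_cast hpm
        have h8 : ((v - w : ℤ) : ℝ) = ((-(s : ℤ) : ℤ) : ℝ) := by exact_mod_cast h7
        push_cast at h8
        linarith [h8]
      rw [ecast] at hfr2
      have e2 : α * (-(s : ℝ)) - (z : ℝ) = -(α * s - (-z : ℤ)) := by
        push_cast
        ring
      rw [e2, abs_neg] at hfr2
      have := hprop s hmem hs1 (-z)
      linarith
  have hcol : (distGraph S).Colorable K := by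
    have C : (distGraph S).Coloring (Fin K) := SimpleGraph.Coloring.mk f hvalid
    have := C.colorable
    simpa using this
  exact hcol.chromaticNumber_le
end

section
/- Let S = {n_j : j ≥ 1} be a set of positive integers, let δ > 0, and suppose θ ∈ (0,1) satisfies ‖θ·n_j‖ > δ for all j ≥ 1. Then the chromatic number of the distance graph G(S) is at most ⌈δ⁻¹⌉. -/
/-- Distance from a real number to the nearest integer. -/
noncomputable def distToInt (x : ℝ) : ℝ := |x - round x|

lemma distToInt_le (x : ℝ) (m : ℤ) : distToInt x ≤ |x - m| := round_le x m

lemma distToInt_neg (x : ℝ) : distToInt (-x) = distToInt x := by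
  apply le_antisymm
  · calc distToInt (-x) ≤ |(-x) - ((-round x : ℤ) : ℝ)| := distToInt_le _ _
    _ = |x - round x| := by push_cast; rw [← abs_neg]; ring_nf
    _ = distToInt x := rfl
  · calc distToInt x ≤ |x - ((-round (-x) : ℤ) : ℝ)| := distToInt_le _ _
    _ = |(-x) - round (-x)| := by push_cast; rw [← abs_neg]; ring_nf
    _ = distToInt (-x) := rfl

/-- Katznelson's observation: if `S` is a set of positive integers, `δ > 0` and
`θ ∈ (0,1)` satisfies `‖θ * k‖ > δ` for all `k ∈ S`, then the chromatic number of the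
distance graph of `S` is at most `⌈δ⁻¹⌉`. -/
theorem chromatic_number_le_of_badly_approximable
    (S : Set ℕ) (hS : ∀ k ∈ S, 0 < k)
    (δ : ℝ) (hδ : 0 < δ)
    (θ : ℝ) (hθ : θ ∈ Set.Ioo (0 : ℝ) 1)
    (h : ∀ k ∈ S, δ < distToInt (θ * k)) :
    (distGraph S).chromaticNumber ≤ (⌈δ⁻¹⌉₊ : ℕ∞) := by
  set N := ⌈δ⁻¹⌉₊ with hNdef
  have hN : 0 < N := Nat.ceil_pos.mpr (by positivity)
  have hNR : (0 : ℝ) < N := by exact_mod_cast hN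
  have hinv : (1 : ℝ) / N ≤ δ := by
    rw [div_le_iff₀ hNR]
    have : δ⁻¹ ≤ (N : ℝ) := Nat.le_ceil δ⁻¹
    calc (1 : ℝ) = δ * δ⁻¹ := by field_simp
    _ ≤ δ * N := by nlinarith
  have hfl : ∀ x : ℤ, (0 : ℤ) ≤ ⌊Int.fract (θ * x) * N⌋ ∧ ⌊Int.fract (θ * x) * N⌋ < (N : ℤ) := by
    intro x
    constructor
    · exact Int.floor_nonneg.mpr (mul_nonneg (Int.fract_nonneg _) hNR.le)
    · exact Int.floor_lt.mpr (by
        have h1 : Int.fract (θ * x) < 1 := Int.fract_lt_one _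
        have h0 : 0 ≤ Int.fract (θ * x) := Int.fract_nonneg _
        push_cast
        nlinarith)
  have hcol : (distGraph S).Colorable N := by
    refine ⟨SimpleGraph.Coloring.mk
      (fun x => ⟨(⌊Int.fract (θ * x) * N⌋).toNat, by have := hfl x; omega⟩) ?_⟩
    intro x y hadj hcontra
    obtain ⟨hne, hmem⟩ := hadj
    have heq : ⌊Int.fract (θ * x) * N⌋ = ⌊Int.fract (θ * y) * N⌋ := by
      have := congrArg Fin.val hcontra
      simp only at this
      have h1 := hfl x; have h2 := hfl y
      omega
    have hlt1 : |Int.fract (θ * x) * N - Int.fract (θ * y) * N| < 1 :=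
      Int.abs_sub_lt_one_of_floor_eq_floor heq
    have hltδ : |Int.fract (θ * x) - Int.fract (θ * y)| < δ := by
      have hm : |Int.fract (θ * x) - Int.fract (θ * y)| * N < 1 := by
        rw [← abs_of_pos hNR, ← abs_mul, sub_mul]
        exact hlt1
      have : |Int.fract (θ * x) - Int.fract (θ * y)| < 1 / N :=
        (lt_div_iff₀ hNR).mpr hm
      linarith
    set m : ℤ := ⌊θ * (x : ℝ)⌋ - ⌊θ * (y : ℝ)⌋ with hm
    have hab : θ * ((x : ℝ) - y) - m = Int.fract (θ * x) - Int.fract (θ * y) := by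
      simp only [Int.fract, hm]
      push_cast
      ring
    have key : distToInt (θ * ((x : ℝ) - y)) < δ := by
      have h2 := distToInt_le (θ * ((x : ℝ) - y)) m
      rw [hab] at h2
      linarith
    have hk : (((x - y).natAbs : ℕ) : ℝ) = |(x : ℝ) - y| := by
      rw [Nat.cast_natAbs]
      push_cast
      rfl
    have hfin := h _ hmem
    rw [hk] at hfin
    rcases abs_cases ((x : ℝ) - y) with ⟨he, _⟩ | ⟨he, _⟩
    · rw [he] at hfin; linarith
    · rw [he, show θ * -((x : ℝ) - y) = -(θ * ((x : ℝ) - y)) by ring,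
        distToInt_neg] at hfin
      linarith
  calc (distGraph S).chromaticNumber ≤ (N : ℕ∞) := hcol.chromaticNumber_le
  _ = _ := rfl
end

section
/- Let (n_j)_{j≥1} be a sequence of positive integers satisfying n_{j+1} > 4·n_j for all j ≥ 1. Then ⋂_{j≥1} {θ ∈ [0,1) : ‖θ·n_j‖ > 1/4} ≠ ∅; that is, there exists θ ∈ [0,1) with ‖θ·n_j‖ > 1/4 for all j ≥ 1. -/
/-- Left endpoints of nested intervals. -/
noncomputable def lacSeq (n : ℕ → ℕ) : ℕ → ℝ
  | 0 => 0
  | j + 1 => (⌈(n (j+1) : ℝ) * lacSeq n j - 5/16⌉ + 5/16) / n (j+1)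

lemma lacSeq_frac (n : ℕ → ℕ) (j : ℕ) (hn : 0 < n (j+1)) :
    ∃ m : ℤ, (n (j+1) : ℝ) * lacSeq n (j+1) = m + 5/16 := by
  refine ⟨⌈(n (j+1) : ℝ) * lacSeq n j - 5/16⌉, ?_⟩
  have hne : (n (j+1) : ℝ) ≠ 0 := by positivity
  rw [lacSeq]
  field_simp

lemma lacSeq_step (n : ℕ → ℕ) (j : ℕ) (hj : 1 ≤ j)
    (hn : 0 < n j) (hlac : 4 * n j < n (j+1)) :
    lacSeq n j ≤ lacSeq n (j+1) ∧
      lacSeq n (j+1) + 3 / (8 * n (j+1)) ≤ lacSeq n j + 3 / (8 * n j) := by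
  set a := lacSeq n j with ha
  have hc : (0 : ℝ) < n (j+1) := by
    have : 0 < n (j+1) := lt_of_le_of_lt (Nat.zero_le _) hlac
    exact_mod_cast this
  have hnj : (0 : ℝ) < n j := by exact_mod_cast hn
  have hceil1 : ((n (j+1) : ℝ)) * a - 5/16 ≤ ⌈(n (j+1) : ℝ) * a - 5/16⌉ := Int.le_ceil _
  have hceil2 : (⌈(n (j+1) : ℝ) * a - 5/16⌉ : ℝ) < ((n (j+1) : ℝ) * a - 5/16) + 1 :=
    Int.ceil_lt_add_one _
  have hrw : lacSeq n (j+1) = (⌈(n (j+1) : ℝ) * a - 5/16⌉ + 5/16) / n (j+1) := by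
    rw [lacSeq]
  constructor
  · rw [hrw, le_div_iff₀ hc]
    nlinarith
  · rw [hrw]
    have hratio : (11 : ℝ) * n j ≤ 3 * n (j+1) := by
      have : 4 * n j + 1 ≤ n (j+1) := hlac
      have h' : (4 * (n j : ℝ) + 1) ≤ n (j+1) := by exact_mod_cast this
      nlinarith
    have l1 : ((⌈(n (j+1) : ℝ) * a - 5/16⌉ : ℝ) + 5/16) / n (j+1) ≤ a + 1 / n (j+1) := by
      rw [div_le_iff₀ hc]
      have hcc : (a + 1 / (n (j+1) : ℝ)) * n (j+1) = n (j+1) * a + 1 := by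
        field_simp
      rw [hcc]
      linarith
    have l2 : 1 / (n (j+1) : ℝ) + 3 / (8 * n (j+1)) ≤ 3 / (8 * n j) := by
      rw [div_add_div _ _ hc.ne' (by positivity), div_le_div_iff₀ (by positivity) (by positivity)]
      nlinarith
    linarith

/-- If `(n j)` is a sequence of positive integers with `n (j+1) > 4 * n j` for all
`j ≥ 1`, then there is `θ ∈ [0,1)` with `‖θ * n j‖ > 1/4` for all `j ≥ 1`. -/
theorem four_lacunary_badly_approximable
    (n : ℕ → ℕ) (hpos : ∀ j, 1 ≤ j → 0 < n j)
    (hlac : ∀ j, 1 ≤ j → 4 * n j < n (j + 1)) :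
    ∃ θ ∈ Set.Ico (0 : ℝ) 1, ∀ j, 1 ≤ j → (1 : ℝ) / 4 < distToInt (θ * n j) := by
  set a := lacSeq n with ha
  -- b j := a j + 3/(8 n j)
  set b : ℕ → ℝ := fun j => a j + 3 / (8 * n j) with hb
  have hnpos : ∀ j, 1 ≤ j → (0 : ℝ) < n j := fun j hj => by exact_mod_cast hpos j hj
  have hstep : ∀ j, 1 ≤ j → a j ≤ a (j+1) ∧ b (j+1) ≤ b j := fun j hj =>
    lacSeq_step n j hj (hpos j hj) (hlac j hj)
  -- monotonicity on indices ≥ 1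
  have hmono : ∀ i j, 1 ≤ i → i ≤ j → a i ≤ a j := by
    intro i j hi hij
    induction j with
    | zero => omega
    | succ k ih =>
      rcases Nat.lt_or_ge i (k+1) with h | h
      · have hk : 1 ≤ k := by omega
        exact le_trans (ih (by omega)) (hstep k hk).1
      · have : i = k + 1 := by omega
        simp [this]
  have hanti : ∀ i j, 1 ≤ i → i ≤ j → b j ≤ b i := by
    intro i j hi hij
    induction j with
    | zero => omega
    | succ k ih =>
      rcases Nat.lt_or_ge i (k+1) with h | h
      · have hk : 1 ≤ k := by omega
        exact le_trans (hstep k hk).2 (ih (by omega))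
      · have : i = k + 1 := by omega
        simp [this]
  have hab : ∀ j, 1 ≤ j → a j ≤ b j := by
    intro j hj
    have := hnpos j hj
    simp only [hb]
    have : (0:ℝ) < 3 / (8 * n j) := by positivity
    linarith
  -- a (j+1) ≤ b 1 for all j
  have hub : ∀ j : ℕ, a (j+1) ≤ b 1 := by
    intro j
    exact le_trans (hab (j+1) (by omega)) (hanti 1 (j+1) le_rfl (by omega))
  have hbdd : BddAbove (Set.range fun j : ℕ => a (j+1)) := ⟨b 1, by rintro x ⟨j, rfl⟩; exact hub j⟩
  set θ := ⨆ j : ℕ, a (j+1) with hθ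
  have hθ_ge : ∀ j, 1 ≤ j → a j ≤ θ := by
    intro j hj
    have : a j = (fun k : ℕ => a (k+1)) (j-1) := by congr 1; omega
    rw [this]
    exact le_ciSup hbdd (j-1)
  have hθ_le : ∀ j, 1 ≤ j → θ ≤ b j := by
    intro j hj
    apply ciSup_le
    intro k
    rcases Nat.lt_or_ge (k+1) j with h | h
    · exact le_trans (hmono (k+1) j (by omega) (by omega)) (hab j hj)
    · exact le_trans (hab (k+1) (by omega)) (hanti j (k+1) hj h)
  -- a 1 and b 1 values
  have hn1 : (0:ℝ) < n 1 := hnpos 1 le_rfl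
  have ha1 : a 1 = 5/16 / n 1 := by
    have hc0 : ⌈(-(5/16) : ℝ)⌉ = 0 := by
      rw [Int.ceil_eq_zero_iff]
      constructor <;> norm_num
    simp only [ha, lacSeq]
    norm_num [hc0]
  have hθ0 : (0:ℝ) ≤ θ := le_trans (by rw [ha1]; positivity) (hθ_ge 1 le_rfl)
  have hθ1 : θ < 1 := by
    have h1 : θ ≤ b 1 := hθ_le 1 le_rfl
    have hn1' : (1:ℝ) ≤ n 1 := by exact_mod_cast hpos 1 le_rfl
    have hbb : b 1 = a 1 + 3 / (8 * n 1) := rfl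
    rw [hbb, ha1] at h1
    have h2 : 5/16 / (n 1:ℝ) + 3 / (8 * n 1) = (11/16) / n 1 := by
      field_simp; ring
    rw [h2] at h1
    have : (11/16 : ℝ) / n 1 ≤ 11/16 := by
      rw [div_le_iff₀ hn1]; nlinarith
    linarith
  refine ⟨θ, ⟨hθ0, hθ1⟩, ?_⟩
  intro j hj
  obtain ⟨j', rfl⟩ : ∃ j', j = j' + 1 := ⟨j - 1, by omega⟩
  obtain ⟨m, hm⟩ := lacSeq_frac n j' (hpos _ hj)
  have hnj : (0:ℝ) < n (j'+1) := hnpos _ hj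
  have hlow : (m : ℝ) + 5/16 ≤ θ * n (j'+1) := by
    rw [← hm]
    have := hθ_ge (j'+1) hj
    nlinarith
  have hhigh : θ * n (j'+1) ≤ m + 11/16 := by
    have h1 := hθ_le (j'+1) hj
    have h2 : (n (j'+1) : ℝ) * b (j'+1) = m + 11/16 := by
      simp only [hb]
      rw [mul_add, hm]
      field_simp
      ring
    calc θ * (n (j'+1) : ℝ) ≤ b (j'+1) * n (j'+1) := mul_le_mul_of_nonneg_right h1 hnj.le
      _ = m + 11/16 := by rw [mul_comm]; exact h2
  -- distToInt bound
  set x := θ * n (j'+1) with hx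
  set k := round x with hk
  have hcase : (k : ℝ) ≤ m ∨ (m : ℝ) + 1 ≤ k := by
    rcases le_or_gt k m with h | h
    · left; exact_mod_cast h
    · right; exact_mod_cast h
  rw [distToInt]
  rcases hcase with h | h
  · rw [abs_of_nonneg (by linarith)]
    linarith
  · rw [abs_of_nonpos (by linarith)]
    linarith
end

section
/- Let ε > 0 and let (n_j)_{j≥1} be a sequence of positive integers satisfying n_{j+1} > (1+ε)·n_j for all j ≥ 1. Let K = ⌈2·ε⁻¹⌉. Then the chromatic number of the distance graph G(S) with S = {n_j : j ≥ 1} is at most 4^K; in particular it is finite. -/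
lemma exists_alpha_s9 (m : ℕ → ℕ) (hpos : ∀ t, 0 < m t)
    (hgrow : ∀ t, 3 * (m t : ℝ) ≤ (m (t+1) : ℝ)) :
    ∃ α : ℝ, ∀ t, Int.fract (α * m t) ∈ Set.Icc (1/4 : ℝ) (3/4) := by
  have hmpos : ∀ t, (0:ℝ) < m t := fun t => by exact_mod_cast hpos t
  have hne : ∀ t, (m t : ℝ) ≠ 0 := fun t => (hmpos t).ne'
  -- recursive construction of left endpoints a and integers k
  let p : ℕ → ℝ × ℤ := fun t => Nat.rec ((1/(4 * (m 0 : ℝ)), (0:ℤ)))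
    (fun t q => ((((⌈(m (t+1) : ℝ) * q.1 - 1/4⌉ : ℤ) : ℝ) + 1/4) / (m (t+1) : ℝ),
      ⌈(m (t+1) : ℝ) * q.1 - 1/4⌉)) t
  set a : ℕ → ℝ := fun t => (p t).1 with ha
  set k : ℕ → ℤ := fun t => (p t).2 with hk
  have heq : ∀ t, (m t : ℝ) * a t = (k t : ℝ) + 1/4 := by
    intro t
    cases t with
    | zero =>
      show (m 0 : ℝ) * (1/(4 * (m 0 : ℝ))) = ((0:ℤ):ℝ) + 1/4
      rw [mul_one_div]
      rw [show (4 : ℝ) * (m 0 : ℝ) = (m 0 : ℝ) * 4 by ring, ← div_div,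
        div_self (hne 0)]
      norm_num
    | succ t =>
      show (m (t+1) : ℝ) * ((((⌈(m (t+1) : ℝ) * a t - 1/4⌉ : ℤ) : ℝ) + 1/4) / (m (t+1) : ℝ))
          = ((⌈(m (t+1) : ℝ) * a t - 1/4⌉ : ℤ) : ℝ) + 1/4
      rw [mul_div_cancel₀ _ (hne (t+1))]
  have hmono : Monotone a := by
    apply monotone_nat_of_le_succ
    intro t
    show a t ≤ ((((⌈(m (t+1) : ℝ) * a t - 1/4⌉ : ℤ) : ℝ) + 1/4) / (m (t+1) : ℝ))
    rw [le_div_iff₀ (hmpos (t+1)), mul_comm]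
    have := Int.le_ceil ((m (t+1) : ℝ) * a t - 1/4)
    linarith
  have hanti : Antitone (fun t => a t + 1/(2 * (m t : ℝ))) := by
    apply antitone_nat_of_succ_le
    intro t
    show ((((⌈(m (t+1) : ℝ) * a t - 1/4⌉ : ℤ) : ℝ) + 1/4) / (m (t+1) : ℝ))
        + 1/(2 * (m (t+1) : ℝ)) ≤ a t + 1/(2 * (m t : ℝ))
    have hceil := Int.ceil_lt_add_one ((m (t+1) : ℝ) * a t - 1/4)
    have hM := hgrow t
    have h1 : (0:ℝ) < m t := hmpos t
    have h2 : (0:ℝ) < m (t+1) := hmpos (t+1)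
    set c : ℝ := ((⌈(m (t+1) : ℝ) * a t - 1/4⌉ : ℤ) : ℝ)
    have e1 : (c + 1/4)/(m (t+1):ℝ) + 1/(2 * (m (t+1):ℝ)) = (c + 3/4)/(m (t+1):ℝ) := by
      field_simp; ring
    rw [e1, div_le_iff₀ h2]
    have h3 : (3:ℝ)/2 ≤ 1/(2*(m t:ℝ)) * (m (t+1):ℝ) := by
      rw [one_div, ← div_eq_inv_mul, le_div_iff₀ (by positivity)]
      linarith
    nlinarith [h3, hceil]
  have hab : ∀ s t, a s ≤ a t + 1/(2 * (m t : ℝ)) := by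
    intro s t
    have hp : (0:ℝ) < 1/(2 * (m (max s t) : ℝ)) := by
      have := hmpos (max s t); positivity
    calc a s ≤ a (max s t) := hmono (le_max_left s t)
    _ ≤ a (max s t) + 1/(2 * (m (max s t) : ℝ)) := by linarith
    _ ≤ a t + 1/(2 * (m t : ℝ)) := hanti (le_max_right s t)
  have hbdd : BddAbove (Set.range a) := ⟨a 0 + 1/(2 * (m 0 : ℝ)), by
    rintro x ⟨s, rfl⟩; exact hab s 0⟩
  refine ⟨⨆ t, a t, fun t => ?_⟩
  have hle : a t ≤ ⨆ t, a t := le_ciSup hbdd t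
  have hge : (⨆ t, a t) ≤ a t + 1/(2 * (m t : ℝ)) := ciSup_le (fun s => hab s t)
  set α := ⨆ t, a t
  have h1 : (k t : ℝ) + 1/4 ≤ (m t : ℝ) * α := by
    rw [← heq t]; exact mul_le_mul_of_nonneg_left hle (le_of_lt (hmpos t))
  have h2 : (m t : ℝ) * α ≤ (k t : ℝ) + 3/4 := by
    have := mul_le_mul_of_nonneg_left hge (le_of_lt (hmpos t))
    rw [mul_add, heq t] at this
    have hm : (m t : ℝ) * (1/(2 * (m t : ℝ))) = 1/2 := by
      rw [mul_one_div,
        show (2 : ℝ) * (m t : ℝ) = (m t : ℝ) * 2 by ring, ← div_div,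
        div_self (hne t)]
    rw [hm] at this; linarith
  have hfloor : ⌊α * (m t : ℝ)⌋ = k t := by
    rw [Int.floor_eq_iff]
    constructor
    · rw [mul_comm]; linarith
    · rw [mul_comm]; linarith
  rw [Int.fract, hfloor]
  constructor
  · rw [mul_comm]; linarith
  · rw [mul_comm]; linarith


lemma fract_aux {w : ℝ} (hw : |w| < 1/4) (h1 : 1/4 ≤ Int.fract w)
    (h2 : Int.fract w ≤ 3/4) : False := by
  obtain ⟨hw1, hw2⟩ := abs_lt.mp hw
  rcases le_or_gt 0 w with h | h
  · rw [Int.fract_eq_self.mpr ⟨h, by linarith⟩] at h1; linarith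
  · have : Int.fract w = w + 1 := by
      rw [← Int.fract_add_intCast w (1 : ℤ)]
      push_cast
      exact Int.fract_eq_self.mpr ⟨by linarith, by linarith⟩
    rw [this] at h2; linarith

lemma color_key (α : ℝ) (x y : ℤ) (d : ℕ)
    (hd : (x - y).natAbs = d)
    (hfr : Int.fract (α * d) ∈ Set.Icc (1/4 : ℝ) (3/4))
    (hc : ⌊4 * Int.fract (α * x)⌋ = ⌊4 * Int.fract (α * y)⌋) : False := by
  set u := Int.fract (α * x) with hu
  set v := Int.fract (α * y) with hv
  have huv : |u - v| < 1/4 := by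
    have h1 := Int.floor_le (4*u)
    have h2 := Int.lt_floor_add_one (4*u)
    have h3 := Int.floor_le (4*v)
    have h4 := Int.lt_floor_add_one (4*v)
    rw [hc] at h1 h2
    rw [abs_sub_lt_iff]; constructor <;> linarith
  have key : ∀ z w : ℤ, Int.fract (α * ((z:ℝ) - (w:ℝ)))
      = Int.fract (Int.fract (α * z) - Int.fract (α * w)) := by
    intro z w
    have e : α * ((z:ℝ) - w)
        = (Int.fract (α * z) - Int.fract (α * w)) + ((⌊α*z⌋ - ⌊α*w⌋ : ℤ) : ℝ) := by
      rw [Int.fract, Int.fract]; push_cast; ring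
    rw [e, Int.fract_add_intCast]
  rcases Int.natAbs_eq (x - y) with h | h
  · -- x - y = d
    have hxy : (x:ℝ) - y = (d:ℝ) := by
      rw [hd] at h
      have : ((x - y : ℤ) : ℝ) = ((d:ℤ):ℝ) := by rw [h]
      push_cast at this ⊢; linarith
    have := key x y
    rw [hxy] at this
    rw [this] at hfr
    exact fract_aux huv hfr.1 hfr.2
  · -- y - x = d
    have hxy : (y:ℝ) - x = (d:ℝ) := by
      rw [hd] at h
      have : ((x - y : ℤ) : ℝ) = ((-(d:ℤ)):ℝ) := by rw [h]; push_cast; ring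
      push_cast at this ⊢; linarith
    have := key y x
    rw [hxy] at this
    rw [this] at hfr
    have huv' : |v - u| < 1/4 := by rw [abs_sub_comm]; exact huv
    exact fract_aux huv' hfr.1 hfr.2

/-- For any lacunary sequence with ratio `1 + ε`, the chromatic number of the associated
distance graph is at most `4 ^ K` where `K = ⌈2 / ε⌉`; in particular it is finite. -/
theorem chromatic_number_finite_easy
    (ε : ℝ) (hε : 0 < ε)
    (n : ℕ → ℕ) (hpos : ∀ j, 1 ≤ j → 0 < n j)
    (hlac : ∀ j, 1 ≤ j → (1 + ε) * (n j : ℝ) < (n (j + 1) : ℝ)) :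
    (distGraph {k : ℕ | ∃ j, 1 ≤ j ∧ n j = k}).chromaticNumber ≤
      ((4 : ℕ) ^ ⌈2 * ε⁻¹⌉₊ : ℕ∞) := by
  set K := ⌈2 * ε⁻¹⌉₊ with hK
  have hK1 : 0 < K := Nat.ceil_pos.mpr (by positivity)
  have hKε : 2 ≤ (K : ℝ) * ε := by
    have h1 : 2 * ε⁻¹ ≤ (K : ℝ) := Nat.le_ceil _
    have := mul_le_mul_of_nonneg_right h1 hε.le
    rw [mul_assoc, inv_mul_cancel₀ hε.ne'] at this
    linarith
  -- growth over t steps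
  have hstep : ∀ t j, 1 ≤ j → (1+ε)^t * (n j : ℝ) ≤ (n (j+t) : ℝ) := by
    intro t
    induction t with
    | zero => intro j hj; simp
    | succ t ih =>
      intro j hj
      have h1 : (1+ε)^(t+1) * (n j : ℝ) = (1+ε) * ((1+ε)^t * (n j : ℝ)) := by ring
      have h2 : (1+ε) * ((1+ε)^t * (n j : ℝ)) ≤ (1+ε) * (n (j+t) : ℝ) := by
        apply mul_le_mul_of_nonneg_left (ih j hj); linarith
      have h3 := (hlac (j+t) (by omega)).le
      have : j + (t+1) = j + t + 1 := by omega
      rw [this]; linarith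
  have h3n : ∀ j, 1 ≤ j → 3 * (n j : ℝ) ≤ (n (j + K) : ℝ) := by
    intro j hj
    have hb : (3:ℝ) ≤ (1+ε)^K := by
      have := one_add_mul_le_pow (a := ε) (by linarith) K
      linarith
    have h0 : (0:ℝ) ≤ (n j : ℝ) := Nat.cast_nonneg _
    calc 3 * (n j : ℝ) ≤ (1+ε)^K * (n j : ℝ) := mul_le_mul_of_nonneg_right hb h0
    _ ≤ _ := hstep K j hj
  -- subsequences
  set m : Fin K → ℕ → ℕ := fun i t => n (i.val + 1 + t * K) with hm
  have hmidx : ∀ (i : Fin K) t, i.val + 1 + (t+1) * K = (i.val + 1 + t * K) + K := by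
    intro i t; ring
  have hα : ∀ i : Fin K, ∃ α : ℝ, ∀ t, Int.fract (α * m i t) ∈ Set.Icc (1/4 : ℝ) (3/4) := by
    intro i
    apply exists_alpha_s9
    · intro t; exact hpos _ (by omega)
    · intro t
      have := h3n (i.val + 1 + t * K) (by omega)
      rw [hm]; simp only []
      rw [hmidx i t]
      exact this
  choose α hαs using hα
  -- the coloring
  have hproper : ∀ {x y : ℤ}, (distGraph {k : ℕ | ∃ j, 1 ≤ j ∧ n j = k}).Adj x y →
      (fun (z : ℤ) (i : Fin K) =>
        (⟨(⌊4 * Int.fract (α i * z)⌋).toNat % 4, Nat.mod_lt _ (by norm_num)⟩ : Fin 4)) x ≠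
      (fun (z : ℤ) (i : Fin K) =>
        (⟨(⌊4 * Int.fract (α i * z)⌋).toNat % 4, Nat.mod_lt _ (by norm_num)⟩ : Fin 4)) y := by
    intro x y hadj hCeq
    obtain ⟨hxy, j, hj1, hjd⟩ := hadj
    set i : Fin K := ⟨(j-1) % K, Nat.mod_lt _ hK1⟩ with hi
    set t : ℕ := (j-1) / K with ht
    have hidx : i.val + 1 + t * K = j := by
      have h2 := Nat.mod_add_div' (j-1) K
      have h3 : i.val = (j-1) % K := rfl
      rw [h3, ht]
      omega
    have hfr : Int.fract (α i * ((x - y).natAbs : ℕ)) ∈ Set.Icc (1/4 : ℝ) (3/4) := by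
      have := hαs i t
      rw [hm] at this; simp only [] at this
      rw [hidx, hjd] at this
      exact this
    -- floor bounds
    have hbnd : ∀ z : ℤ, 0 ≤ ⌊4 * Int.fract (α i * z)⌋ ∧ ⌊4 * Int.fract (α i * z)⌋ < 4 := by
      intro z
      constructor
      · apply Int.floor_nonneg.mpr
        have := Int.fract_nonneg (α i * z); linarith
      · apply Int.floor_lt.mpr
        have := Int.fract_lt_one (α i * z); push_cast; linarith
    have heqi := congrFun hCeq i
    simp only [Fin.mk.injEq] at heqi
    have hfl : ⌊4 * Int.fract (α i * x)⌋ = ⌊4 * Int.fract (α i * y)⌋ := by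
      obtain ⟨hx0, hx4⟩ := hbnd x
      obtain ⟨hy0, hy4⟩ := hbnd y
      omega
    exact color_key (α i) x y _ rfl hfr hfl
  have hcol : (distGraph {k : ℕ | ∃ j, 1 ≤ j ∧ n j = k}).Colorable (4 ^ K) := by
    have hc := (SimpleGraph.Coloring.mk _ hproper).colorable
    simpa using hc
  have := hcol.chromaticNumber_le
  exact le_trans this (by norm_cast)
end

section
/- For every real ε with 0 < ε < 1 there exists a sequence (n_j)_{j≥1} of positive integers satisfying n_{j+1} ≥ (1+ε)·n_j for all j ≥ 1 such that the chromatic number of the distance graph G(S) with S = {n_j : j ≥ 1} is strictly greater than ⌊ε⁻¹⌋. -/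
/-- For every `0 < ε < 1` there is a lacunary sequence with ratio `1 + ε` whose distance
graph has chromatic number greater than `⌊ε⁻¹⌋`. -/
theorem chromatic_number_lower_bound
    (ε : ℝ) (hε : 0 < ε) (hε' : ε < 1) :
    ∃ n : ℕ → ℕ,
      (∀ j, 1 ≤ j → 0 < n j) ∧
      (∀ j, 1 ≤ j → (1 + ε) * (n j : ℝ) ≤ (n (j + 1) : ℝ)) ∧
      ((⌊ε⁻¹⌋₊ : ℕ∞) <
        (distGraph {k : ℕ | ∃ j, 1 ≤ j ∧ n j = k}).chromaticNumber) := by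
  set m := ⌊ε⁻¹⌋₊ with hm
  have hε1 : (1:ℝ) ≤ ε⁻¹ := (one_le_inv_iff₀).mpr ⟨hε, hε'.le⟩
  have hm1 : 1 ≤ m := (Nat.one_le_floor_iff _).mpr hε1
  refine ⟨fun j => if j ≤ m then j else m * 2 ^ (j - m), ?_, ?_, ?_⟩
  · intro j hj
    by_cases h : j ≤ m <;> simp only [h, if_true, if_false] <;> positivity
  · intro j hj
    simp only
    by_cases h : j + 1 ≤ m
    · have h' : j ≤ m := by omega
      rw [if_pos h', if_pos h]
      have hjε : (j : ℝ) ≤ ε⁻¹ := by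
        calc (j : ℝ) ≤ m := by exact_mod_cast (by omega : j ≤ m)
        _ ≤ ε⁻¹ := Nat.floor_le (by positivity)
      have hc : ε * ε⁻¹ = 1 := mul_inv_cancel₀ hε.ne'
      have h1 : ε * j ≤ 1 := by nlinarith
      push_cast
      nlinarith
    · by_cases h' : j ≤ m
      · have hjm : j = m := by omega
        rw [if_pos h', if_neg h]
        have hsub : j + 1 - m = 1 := by omega
        rw [hsub, pow_one]
        have hjm' : (j : ℝ) = (m : ℝ) := by exact_mod_cast hjm
        have hm' : (1:ℝ) ≤ (m:ℝ) := by exact_mod_cast hm1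
        push_cast
        nlinarith
      · rw [if_neg h', if_neg h]
        have hsub : j + 1 - m = (j - m) + 1 := by omega
        rw [hsub, pow_succ]
        have hp : (0:ℝ) < (m : ℝ) * 2 ^ (j - m) := by positivity
        push_cast
        nlinarith
  · classical
    set S : Set ℕ := {k : ℕ | ∃ j, 1 ≤ j ∧ (if j ≤ m then j else m * 2 ^ (j - m)) = k} with hS
    have hmem : ∀ k : ℕ, 1 ≤ k → k ≤ m → k ∈ S := by
      intro k h1 h2
      exact ⟨k, h1, by simp [h2]⟩
    set s : Finset ℤ := Finset.Icc (0:ℤ) (m:ℤ) with hs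
    have hcard : s.card = m + 1 := by
      rw [hs, Int.card_Icc]
      omega
    have hclique : (distGraph S).IsClique s := by
      intro x hx y hy hxy
      simp only [hs, Finset.coe_Icc, Set.mem_Icc] at hx hy
      refine ⟨hxy, hmem _ ?_ ?_⟩ <;> omega
    have h2 := hclique.card_le_chromaticNumber
    rw [hcard] at h2
    calc (m : ℕ∞) < ((m + 1 : ℕ) : ℕ∞) := by exact_mod_cast Nat.lt_succ_self m
    _ ≤ _ := h2
end

section
/- There exists a universal constant c > 0 with the following property. Let 0 < ε < 1/4 and let (n_j)_{j≥1} be a sequence of positive integers satisfying n_{j+1} ≥ (1+ε)·n_j for all j ≥ 1. Suppose N is a positive integer and a_0, a_1, …, a_N are real numbers such that the trigonometric polynomial T(x) = a_0 + Σ_{j=1}^{N} a_j·cos(2π·n_j·x) satisfies T(x) ≥ 0 for all x ∈ ℝ and T(0) = 1. Then a_0 > c·ε·|log ε|⁻¹. -/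
open Finset

noncomputable section
namespace NTP

abbrev A := AddMonoidAlgebra ℝ ℤ

instance : CoeFun A (fun _ => ℤ → ℝ) := ⟨fun f => f.coeff⟩

def expChar (x : ℝ) : Multiplicative ℤ →* ℂ where
  toFun k := Complex.exp (2 * Real.pi * Complex.I * x * (Multiplicative.toAdd k : ℤ))
  map_one' := by simp
  map_mul' k l := by
    simp only [toAdd_mul]
    push_cast
    rw [mul_add, Complex.exp_add]

def ev (x : ℝ) : A →ₐ[ℝ] ℂ := AddMonoidAlgebra.lift ℝ ℂ ℤ (expChar x)

lemma ev_single (x : ℝ) (k : ℤ) (c : ℝ) :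
    ev x (AddMonoidAlgebra.single k c) = c * Complex.exp (2 * Real.pi * Complex.I * x * k) := by
  rw [ev, AddMonoidAlgebra.lift_single]
  show c • Complex.exp (2 * Real.pi * Complex.I * x * (Multiplicative.toAdd (Multiplicative.ofAdd k) : ℤ)) = _
  rw [toAdd_ofAdd, Complex.real_smul]

def cosE (m : ℤ) : A :=
  (1/2 : ℝ) • (AddMonoidAlgebra.single m 1 + AddMonoidAlgebra.single (-m) 1)

lemma ev_cosE (x : ℝ) (m : ℤ) : ev x (cosE m) = (Real.cos (2 * Real.pi * m * x) : ℂ) := by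
  simp only [cosE, map_smul, map_add, ev_single]
  rw [Complex.ofReal_cos, Complex.cos, Complex.real_smul]
  push_cast
  rw [show (-(2 * (Real.pi:ℂ) * ↑m * ↑x)) * Complex.I = 2 * ↑Real.pi * Complex.I * ↑x * (-(m:ℂ)) by ring]
  rw [show 2 * (Real.pi:ℂ) * ↑m * ↑x * Complex.I = 2 * ↑Real.pi * Complex.I * ↑x * (m:ℂ) by ring]
  ring

end NTP

namespace NTP2
open NTP

lemma mul_cosE_apply (f : A) (m q : ℤ) :
    (f * cosE m) q = (f (q - m) + f (q + m)) / 2 := by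
  rw [cosE, mul_smul_comm]
  rw [AddMonoidAlgebra.coeff_smul_apply]
  rw [mul_add, AddMonoidAlgebra.coeff_add, Finsupp.add_apply, AddMonoidAlgebra.coeff_mul_single_apply,
    AddMonoidAlgebra.coeff_mul_single_apply]
  rw [neg_neg, smul_eq_mul]
  ring

lemma one_sub_cosE_coeff (f : A) (m q : ℤ) :
    (f * (1 - cosE m)) q = f q - (f (q - m) + f (q + m)) / 2 := by
  rw [mul_sub, mul_one, AddMonoidAlgebra.coeff_sub, Finsupp.sub_apply, mul_cosE_apply]

lemma one_coeff (q : ℤ) : (1 : A) q = if q = 0 then 1 else 0 := by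
  rw [AddMonoidAlgebra.one_def]
  rw [AddMonoidAlgebra.coeff_single, Finsupp.single_apply]
  simp [eq_comm]

section lac
variable {ε : ℝ} {n : ℕ → ℕ}
  (hε0 : 0 < ε)
  (hpos : ∀ j, 1 ≤ j → 0 < n j)
  (hlac : ∀ j, 1 ≤ j → (1 + ε) * (n j : ℝ) ≤ (n (j + 1) : ℝ))

include hε0 hpos hlac

lemma lac_lt : ∀ i j : ℕ, 1 ≤ i → i < j → (1 + ε) * (n i : ℝ) ≤ n j := by
  intro i j hi hij
  induction j, hij using Nat.le_induction with
  | base => exact hlac i hi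
  | succ j hj ih =>
    have h1 : (n j : ℝ) ≤ n (j + 1) := by
      have := hlac j (le_trans hi (Nat.le_of_succ_le hj))
      nlinarith [Nat.cast_nonneg (α := ℝ) (n j)]
    linarith

lemma lac_mono : ∀ i j : ℕ, 1 ≤ i → i ≤ j → (n i : ℝ) ≤ n j := by
  intro i j hi hij
  rcases eq_or_lt_of_le hij with rfl | h
  · exact le_refl _
  · have h2 := lac_lt hε0 hpos hlac i j hi h
    nlinarith [Nat.cast_nonneg (α := ℝ) (n i)]

lemma lac_pow : ∀ i d : ℕ, 1 ≤ i → (1 + ε) ^ d * (n i : ℝ) ≤ n (i + d) := by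
  intro i d hi
  induction d with
  | zero => simp
  | succ d ih =>
    have h2 := hlac (i + d) (le_trans hi (Nat.le_add_right _ _))
    calc (1 + ε) ^ (d+1) * (n i : ℝ) = (1+ε) * ((1+ε)^d * n i) := by ring
    _ ≤ (1+ε) * n (i + d) := by nlinarith
    _ ≤ n (i + d + 1) := h2

end lac

section sumlem
variable {ε : ℝ} {n : ℕ → ℕ}

lemma sum_n_le (hε0 : 0 < ε) (hε : ε < 1/4) (S : Finset ℕ)
    (hpair : ∀ i ∈ S, ∀ j ∈ S, i < j → 2 * (n i : ℝ) ≤ ε * n j) :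
    ∀ J : ℕ, (∀ j ∈ S, 2 * (n j : ℝ) ≤ ε * n J) →
      (∑ j ∈ S, (n j : ℝ)) ≤ (4 * ε / 7) * n J := by
  induction S using Finset.induction_on_max with
  | empty =>
    intro J _
    simp
    positivity
  | insert K s hs ih =>
    intro J hJ
    have hK : K ∉ s := fun h => lt_irrefl K (hs K h)
    rw [Finset.sum_insert hK]
    have ih' := ih (fun i hi j hj hij => hpair i (Finset.mem_insert_of_mem hi) j
      (Finset.mem_insert_of_mem hj) hij) K
      (fun j hj => hpair j (Finset.mem_insert_of_mem hj) K (Finset.mem_insert_self K s) (hs j hj))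
    have hKJ : 2 * (n K : ℝ) ≤ ε * n J := hJ K (Finset.mem_insert_self K s)
    have h0 : (0:ℝ) ≤ n K := Nat.cast_nonneg _
    nlinarith [ih']

end sumlem

def RZ (n : ℕ → ℕ) (S : Finset ℕ) : A := ∏ j ∈ S, (1 - cosE (n j))

section inv
variable {ε : ℝ} {n : ℕ → ℕ} {N : ℕ}

lemma RZ_inv (hε0 : 0 < ε) (hε : ε < 1/4)
    (hpos : ∀ j, 1 ≤ j → 0 < n j)
    (hlac : ∀ j, 1 ≤ j → (1 + ε) * (n j : ℝ) ≤ (n (j + 1) : ℝ))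
    (S : Finset ℕ) :
    S ⊆ Finset.Icc 1 N →
    (∀ i ∈ S, ∀ j ∈ S, i < j → 2 * (n i : ℝ) ≤ ε * n j) →
    (∀ q : ℤ, RZ n S (-q) = RZ n S q) ∧
    RZ n S 0 = 1 ∧
    (∀ j ∈ S, RZ n S ((n j : ℤ)) = -(1/2)) ∧
    (∀ i ∈ Finset.Icc 1 N, i ∉ S → RZ n S ((n i : ℤ)) = 0) ∧
    (∀ q : ℤ, (∑ j ∈ S, (n j : ℝ)) < |(q : ℝ)| → RZ n S q = 0) := by
  induction S using Finset.induction_on_max with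
  | empty =>
    intro _ _
    have h1 : ∀ q : ℤ, RZ n ∅ q = if q = 0 then 1 else 0 := by
      intro q; rw [RZ, Finset.prod_empty, one_coeff]
    refine ⟨?_, ?_, ?_, ?_, ?_⟩
    · intro q; rw [h1, h1]; simp [neg_eq_zero]
    · rw [h1]; simp
    · intro j hj; simp at hj
    · intro i hi _
      rw [h1]
      have : (0:ℤ) < (n i : ℤ) := by
        exact_mod_cast hpos i (Finset.mem_Icc.mp hi).1
      simp [this.ne', Nat.pos_iff_ne_zero.mp (hpos i (Finset.mem_Icc.mp hi).1)]
    · intro q hq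
      rw [h1]
      have : q ≠ 0 := by
        intro h; subst h; simp at hq
      simp [this]
  | insert J s hmax ih =>
    intro hsub hpair
    have hJns : J ∉ s := fun h => lt_irrefl J (hmax J h)
    have hJmem : J ∈ Finset.Icc 1 N := hsub (Finset.mem_insert_self _ _)
    have hJ1 : 1 ≤ J := (Finset.mem_Icc.mp hJmem).1
    have hsub' : s ⊆ Finset.Icc 1 N := fun x hx => hsub (Finset.mem_insert_of_mem hx)
    have hpair' : ∀ i ∈ s, ∀ j ∈ s, i < j → 2 * (n i : ℝ) ≤ ε * n j :=
      fun i hi j hj hij => hpair i (Finset.mem_insert_of_mem hi) j (Finset.mem_insert_of_mem hj) hij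
    obtain ⟨sym, c0, cS, cout, key⟩ := ih hsub' hpair'
    have hP : (∑ j ∈ s, (n j : ℝ)) ≤ 4 * ε / 7 * n J :=
      sum_n_le hε0 hε s hpair' J
        (fun j hj => hpair j (Finset.mem_insert_of_mem hj) J (Finset.mem_insert_self J s) (hmax j hj))
    have hJpos : (0:ℝ) < n J := by exact_mod_cast hpos J hJ1
    have hP0 : (0:ℝ) ≤ ∑ j ∈ s, (n j : ℝ) := Finset.sum_nonneg (fun j _ => Nat.cast_nonneg _)
    have hPlt : (∑ j ∈ s, (n j : ℝ)) < (n J : ℝ) := by nlinarith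
    have coeff : ∀ q : ℤ, RZ n (insert J s) q
        = RZ n s q - (RZ n s (q - (n J : ℤ)) + RZ n s (q + (n J : ℤ))) / 2 := by
      intro q
      rw [RZ, Finset.prod_insert hJns, mul_comm, ← RZ, one_sub_cosE_coeff]
    refine ⟨?_, ?_, ?_, ?_, ?_⟩
    · -- symmetry
      intro q
      rw [coeff, coeff, sym q, show -q - (n J : ℤ) = -(q + (n J : ℤ)) by ring,
        show -q + (n J : ℤ) = -(q - (n J : ℤ)) by ring, sym, sym]
      ring
    · -- value at 0
      rw [coeff, c0,
        key (0 - (n J : ℤ)) (lt_abs.mpr (by push_cast; right; nlinarith)),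
        key (0 + (n J : ℤ)) (lt_abs.mpr (by push_cast; left; nlinarith))]
      norm_num
    · -- value at n j for j in insert J s
      intro j hj
      rcases Finset.mem_insert.mp hj with rfl | hjs
      · rw [coeff, sub_self, c0,
          key ((n j : ℤ) + (n j : ℤ)) (lt_abs.mpr (by push_cast; left; nlinarith)),
          key ((n j : ℤ)) (lt_abs.mpr (by push_cast; left; nlinarith))]
        norm_num
      · have hj1 : 1 ≤ j := (Finset.mem_Icc.mp (hsub' hjs)).1
        have hjJ : 2 * (n j : ℝ) ≤ ε * n J :=
          hpair j (Finset.mem_insert_of_mem hjs) J (Finset.mem_insert_self J s) (hmax j hjs)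
        have hjpos : (0:ℝ) ≤ n j := Nat.cast_nonneg _
        rw [coeff, cS j hjs,
          key ((n j : ℤ) - (n J : ℤ)) (lt_abs.mpr (by push_cast; right; nlinarith)),
          key ((n j : ℤ) + (n J : ℤ)) (lt_abs.mpr (by push_cast; left; nlinarith))]
        norm_num
    · -- value at n i for i outside
      intro i hi hins
      have hins' : i ∉ s := fun h => hins (Finset.mem_insert_of_mem h)
      have hiJ : i ≠ J := fun h => hins (h ▸ Finset.mem_insert_self _ _)
      have hi1 : 1 ≤ i := (Finset.mem_Icc.mp hi).1
      have hipos : (0:ℝ) ≤ n i := Nat.cast_nonneg _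
      have habs : (∑ j ∈ s, (n j : ℝ)) < |(((n i : ℤ) - (n J : ℤ) : ℤ) : ℝ)| := by
        rcases lt_or_gt_of_ne hiJ with h | h
        · have hlt := lac_lt hε0 hpos hlac i J hi1 h
          refine lt_abs.mpr ?_
          push_cast
          right; nlinarith
        · have hlt := lac_lt hε0 hpos hlac J i hJ1 h
          refine lt_abs.mpr ?_
          push_cast
          left; nlinarith
      rw [coeff, cout i hi hins', key _ habs,
        key ((n i : ℤ) + (n J : ℤ)) (lt_abs.mpr (by push_cast; left; nlinarith))]
      norm_num
    · -- support bound
      intro q hq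
      rw [Finset.sum_insert hJns] at hq
      have habs0 : (∑ j ∈ s, (n j : ℝ)) < |(q : ℝ)| := by linarith
      have h1 : (∑ j ∈ s, (n j : ℝ)) < |((q - (n J : ℤ) : ℤ) : ℝ)| := by
        have h2 := abs_sub_abs_le_abs_sub (q : ℝ) ((n J : ℝ))
        rw [abs_of_pos hJpos] at h2
        push_cast
        linarith
      have h2 : (∑ j ∈ s, (n j : ℝ)) < |((q + (n J : ℤ) : ℤ) : ℝ)| := by
        have h3 := abs_sub_abs_le_abs_sub (q : ℝ) (-(n J : ℝ))
        rw [abs_neg, abs_of_pos hJpos, sub_neg_eq_add] at h3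
        push_cast
        linarith [h3]
      rw [coeff, key q habs0, key _ h1, key _ h2]
      norm_num

end inv

section keylem
variable {ε : ℝ} {n : ℕ → ℕ} {N : ℕ}

lemma cosE_mul_apply (m : ℤ) (f : A) (q : ℤ) :
    (cosE m * f) q = (f (-m + q) + f (m + q)) / 2 := by
  rw [cosE, smul_mul_assoc, AddMonoidAlgebra.coeff_smul_apply, add_mul, AddMonoidAlgebra.coeff_add, Finsupp.add_apply,
    AddMonoidAlgebra.coeff_single_mul_apply, AddMonoidAlgebra.coeff_single_mul_apply, neg_neg, smul_eq_mul]
  ring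

def TE (n : ℕ → ℕ) (N : ℕ) (a : ℕ → ℝ) : A :=
  AddMonoidAlgebra.single 0 (a 0) + ∑ j ∈ Finset.Icc 1 N, a j • cosE ((n j : ℤ))

lemma ev_TE (a : ℕ → ℝ) (x : ℝ) :
    ev x (TE n N a)
      = ((a 0 + ∑ j ∈ Finset.Icc 1 N, a j * Real.cos (2 * Real.pi * n j * x) : ℝ) : ℂ) := by
  rw [TE, map_add, map_sum, ev_single]
  push_cast
  rw [mul_zero, Complex.exp_zero, mul_one]
  congr 1
  refine Finset.sum_congr rfl (fun j _ => ?_)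
  rw [map_smul, ev_cosE]
  push_cast
  rw [Complex.real_smul]

lemma TE_mul_coeff (a : ℕ → ℝ) (R : A) (q : ℤ) :
    (TE n N a * R) q = a 0 * R q
      + ∑ j ∈ Finset.Icc 1 N, a j * ((R (-(n j : ℤ) + q) + R ((n j : ℤ) + q)) / 2) := by
  rw [TE, add_mul, Finset.sum_mul, AddMonoidAlgebra.coeff_add, Finsupp.add_apply, AddMonoidAlgebra.coeff_single_mul_apply,
    neg_zero, zero_add]
  congr 1
  rw [AddMonoidAlgebra.coeff_sum, Finset.sum_apply']
  refine Finset.sum_congr rfl (fun j _ => ?_)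
  rw [smul_mul_assoc, AddMonoidAlgebra.coeff_smul_apply, cosE_mul_apply, smul_eq_mul]

lemma avg (F : A) (W : ℝ) (hW : 0 ≤ W) (hF : ∀ q : ℤ, W < |(q : ℝ)| → F q = 0)
    (Q : ℕ) (hQ : W < Q) :
    ∑ t ∈ Finset.range Q, ev ((t : ℝ) / Q) F = (Q : ℂ) * ((F 0 : ℝ) : ℂ) := by
  have hQ0 : (0:ℝ) < Q := lt_of_le_of_lt hW hQ
  have hQne : (Q : ℂ) ≠ 0 := by
    simp only [ne_eq, Nat.cast_eq_zero]
    exact_mod_cast hQ0.ne'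
  have hev : ∀ x : ℝ, ev x F = ∑ k ∈ F.coeff.support, F k • Complex.exp (2 * Real.pi * Complex.I * x * k) := by
    intro x
    rw [ev, AddMonoidAlgebra.lift_apply]
    rfl
  have hswap : ∑ t ∈ Finset.range Q, ev ((t : ℝ) / Q) F
      = ∑ k ∈ F.coeff.support, F k • ∑ t ∈ Finset.range Q,
          Complex.exp (2 * Real.pi * Complex.I * (((t : ℝ) / (Q : ℝ) : ℝ) : ℂ) * k) := by
    simp only [hev]
    rw [Finset.sum_comm]
    exact Finset.sum_congr rfl (fun k _ => (Finset.smul_sum).symm)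
  rw [hswap]
  have hinner : ∀ k ∈ F.coeff.support,
      (∑ t ∈ Finset.range Q, Complex.exp (2 * Real.pi * Complex.I * (((t : ℝ) / (Q : ℝ) : ℝ) : ℂ) * k))
        = if k = 0 then (Q : ℂ) else 0 := by
    intro k hk
    have hexp : ∀ t : ℕ, Complex.exp (2 * Real.pi * Complex.I * (((t : ℝ) / (Q : ℝ) : ℝ) : ℂ) * k)
        = Complex.exp (2 * Real.pi * Complex.I * k / Q) ^ t := by
      intro t
      rw [← Complex.exp_nat_mul]
      congr 1
      push_cast
      field_simp
    simp only [hexp]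
    by_cases hk0 : k = 0
    · subst hk0
      simp
    · rw [if_neg hk0]
      have hkW : |(k : ℝ)| ≤ W := by
        by_contra h
        exact (Finsupp.mem_support_iff.mp hk) (hF k (lt_of_not_ge h))
      set z : ℂ := Complex.exp (2 * Real.pi * Complex.I * k / Q) with hz
      have hzQ : z ^ Q = 1 := by
        rw [hz, ← Complex.exp_nat_mul]
        have : (Q : ℂ) * (2 * Real.pi * Complex.I * k / Q) = k * (2 * Real.pi * Complex.I) := by
          field_simp
        rw [this]
        exact Complex.exp_int_mul_two_pi_mul_I k
      have hz1 : z ≠ 1 := by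
        intro h
        rw [hz, Complex.exp_eq_one_iff] at h
        obtain ⟨nn, hnn⟩ := h
        have hIpi : (2 * Real.pi * Complex.I : ℂ) ≠ 0 := by
          simp [Complex.I_ne_zero, Real.pi_ne_zero, Complex.ofReal_ne_zero]
        have hkQ : (k : ℂ) = nn * Q := by
          field_simp at hnn
          have h2 : (k : ℂ) * (2 * Real.pi * Complex.I) = nn * (2 * Real.pi * Complex.I) * Q := by
            rw [hnn]; ring
          have h3 := mul_right_cancel₀ hIpi (by linear_combination h2 - (nn * (Q:ℂ)) * mul_comm (2 * Real.pi * Complex.I) (1:ℂ) : (k : ℂ) * (2 * Real.pi * Complex.I) = (nn * Q) * (2 * Real.pi * Complex.I))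
          exact h3
        have hkQ' : k = nn * Q := by exact_mod_cast hkQ
        have hnn0 : nn ≠ 0 := by
          intro h0
          rw [h0] at hkQ'
          simp at hkQ'
          exact hk0 hkQ'
        have : (Q : ℝ) ≤ |(k : ℝ)| := by
          rw [hkQ']
          push_cast
          rw [abs_mul, abs_of_pos hQ0]
          have : (1:ℝ) ≤ |(nn:ℝ)| := by
            rw [← Int.cast_abs]
            exact_mod_cast Int.one_le_abs hnn0
          nlinarith
        linarith
      rw [geom_sum_eq hz1, hzQ]
      simp
  rw [Finset.sum_congr rfl (fun k hk => by rw [hinner k hk])]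
  have : ∀ k ∈ F.coeff.support, (F k • if k = 0 then (Q:ℂ) else 0)
      = if k = 0 then F k • (Q:ℂ) else 0 := by
    intro k _
    split <;> simp
  rw [Finset.sum_congr rfl this, Finset.sum_ite_eq' F.coeff.support 0 (fun k => F k • (Q:ℂ))]
  by_cases h0 : (0:ℤ) ∈ F.coeff.support
  · rw [if_pos h0, Complex.real_smul]
    ring
  · rw [if_neg h0]
    rw [Finsupp.notMem_support_iff.mp h0]
    simp

end keylem

section keyineq
variable {ε : ℝ} {n : ℕ → ℕ} {N : ℕ}

lemma key_ineq (hε0 : 0 < ε) (hε : ε < 1/4)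
    (hpos : ∀ j, 1 ≤ j → 0 < n j)
    (hlac : ∀ j, 1 ≤ j → (1 + ε) * (n j : ℝ) ≤ (n (j + 1) : ℝ))
    (a : ℕ → ℝ)
    (hT : ∀ x : ℝ, 0 ≤ a 0 + ∑ j ∈ Finset.Icc 1 N, a j * Real.cos (2 * Real.pi * n j * x))
    (S : Finset ℕ) (hsub : S ⊆ Finset.Icc 1 N)
    (hpair : ∀ i ∈ S, ∀ j ∈ S, i < j → 2 * (n i : ℝ) ≤ ε * n j) :
    (1/2) * ∑ j ∈ S, a j ≤ a 0 := by
  obtain ⟨sym, c0, cS, cout, key⟩ := RZ_inv (N := N) hε0 hε hpos hlac S hsub hpair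
  set F : A := TE n N a * RZ n S with hFdef
  have hF0 : F 0 = a 0 - (1/2) * ∑ j ∈ S, a j := by
    rw [hFdef, TE_mul_coeff, c0, mul_one]
    have hterm : ∀ j ∈ Finset.Icc 1 N,
        a j * ((RZ n S (-(n j : ℤ) + 0) + RZ n S ((n j : ℤ) + 0)) / 2)
          = if j ∈ S then -(1/2) * a j else 0 := by
      intro j hj
      rw [add_zero, add_zero, sym]
      by_cases hjS : j ∈ S
      · rw [if_pos hjS, cS j hjS]; ring
      · rw [if_neg hjS, cout j hj hjS]; ring
    rw [Finset.sum_congr rfl hterm, Finset.sum_ite_mem,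
      (Finset.inter_eq_right).mpr hsub, ← Finset.mul_sum]
    ring
  set W : ℝ := (∑ j ∈ Finset.Icc 1 N, (n j : ℝ)) + ∑ j ∈ S, (n j : ℝ) with hWdef
  have hS0 : (0:ℝ) ≤ ∑ j ∈ S, (n j : ℝ) := Finset.sum_nonneg (fun j _ => Nat.cast_nonneg _)
  have hI0 : (0:ℝ) ≤ ∑ j ∈ Finset.Icc 1 N, (n j : ℝ) :=
    Finset.sum_nonneg (fun j _ => Nat.cast_nonneg _)
  have hW0 : 0 ≤ W := by rw [hWdef]; linarith
  have hFvan : ∀ q : ℤ, W < |(q : ℝ)| → F q = 0 := by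
    intro q hq
    rw [hFdef, TE_mul_coeff]
    have hq1 : (∑ j ∈ S, (n j : ℝ)) < |(q : ℝ)| := by
      rw [hWdef] at hq; linarith
    rw [key q hq1, mul_zero, zero_add]
    refine Finset.sum_eq_zero (fun j hj => ?_)
    have hnj : (n j : ℝ) ≤ ∑ i ∈ Finset.Icc 1 N, (n i : ℝ) :=
      Finset.single_le_sum (f := fun i => (n i : ℝ)) (fun i _ => Nat.cast_nonneg _) hj
    have habs1 : (∑ i ∈ S, (n i : ℝ)) < |((-(n j : ℤ) + q : ℤ) : ℝ)| := by
      have h3 := abs_sub_abs_le_abs_sub (q : ℝ) ((n j : ℝ))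
      rw [abs_of_nonneg (show (0:ℝ) ≤ (n j : ℝ) from Nat.cast_nonneg _)] at h3
      push_cast
      rw [hWdef] at hq
      rw [show -(n j : ℝ) + (q:ℝ) = (q:ℝ) - (n j : ℝ) by ring]
      linarith
    have habs2 : (∑ i ∈ S, (n i : ℝ)) < |(((n j : ℤ) + q : ℤ) : ℝ)| := by
      have h3 := abs_sub_abs_le_abs_sub (q : ℝ) (-(n j : ℝ))
      rw [abs_neg, abs_of_nonneg (show (0:ℝ) ≤ (n j : ℝ) from Nat.cast_nonneg _), sub_neg_eq_add] at h3
      push_cast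
      rw [hWdef] at hq
      rw [show (n j : ℝ) + (q:ℝ) = (q:ℝ) + (n j : ℝ) by ring]
      linarith
    rw [key _ habs1, key _ habs2]
    ring
  set Q : ℕ := ⌈W⌉₊ + 1 with hQdef
  have hQ : W < Q := by
    rw [hQdef]
    push_cast
    have := Nat.le_ceil W
    linarith
  have havg := avg F W hW0 hFvan Q hQ
  have hevF : ∀ x : ℝ, ev x F =
      (((a 0 + ∑ j ∈ Finset.Icc 1 N, a j * Real.cos (2 * Real.pi * n j * x))
        * ∏ j ∈ S, (1 - Real.cos (2 * Real.pi * n j * x)) : ℝ) : ℂ) := by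
    intro x
    rw [hFdef, map_mul, ev_TE]
    have : ev x (RZ n S) = ((∏ j ∈ S, (1 - Real.cos (2 * Real.pi * n j * x)) : ℝ) : ℂ) := by
      rw [RZ, map_prod, Complex.ofReal_prod]
      refine Finset.prod_congr rfl (fun j _ => ?_)
      rw [map_sub, map_one, ev_cosE]
      push_cast
      ring
    rw [this]
    push_cast
    ring
  have hsum : ((∑ t ∈ Finset.range Q, ((a 0 + ∑ j ∈ Finset.Icc 1 N, a j * Real.cos (2 * Real.pi * n j * ((t:ℝ)/Q)))
      * ∏ j ∈ S, (1 - Real.cos (2 * Real.pi * n j * ((t:ℝ)/Q)))) : ℝ) : ℂ)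
      = (Q : ℂ) * ((F 0 : ℝ) : ℂ) := by
    rw [← havg]
    rw [Complex.ofReal_sum]
    exact Finset.sum_congr rfl (fun t _ => (hevF ((t:ℝ)/Q)).symm)
  have hsumR : (∑ t ∈ Finset.range Q, ((a 0 + ∑ j ∈ Finset.Icc 1 N, a j * Real.cos (2 * Real.pi * n j * ((t:ℝ)/Q)))
      * ∏ j ∈ S, (1 - Real.cos (2 * Real.pi * n j * ((t:ℝ)/Q))))) = (Q : ℝ) * F 0 := by
    have := hsum
    rw [show ((Q:ℂ) * ((F 0 : ℝ):ℂ)) = (((Q : ℝ) * F 0 : ℝ) : ℂ) by push_cast; ring] at this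
    exact_mod_cast this
  have hnonneg : 0 ≤ (Q : ℝ) * F 0 := by
    rw [← hsumR]
    refine Finset.sum_nonneg (fun t _ => mul_nonneg (hT _) ?_)
    refine Finset.prod_nonneg (fun j _ => ?_)
    have := Real.cos_le_one (2 * Real.pi * n j * ((t:ℝ)/Q))
    linarith
  have hQpos : (0:ℝ) < Q := by
    rw [hQdef]; push_cast; positivity
  have hF0pos : 0 ≤ F 0 := nonneg_of_mul_nonneg_right hnonneg hQpos
  rw [hF0] at hF0pos
  linarith

end keyineq

end NTP2
end

set_option maxHeartbeats 2000000 in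
/-- There is a universal constant `c > 0` such that whenever `(n j)` is lacunary with
ratio `1 + ε` (`0 < ε < 1/4`) and `T x = a 0 + ∑_{j=1}^N a j * cos (2π n j x)` is a
nonnegative trigonometric polynomial with `T 0 = 1`, one has
`∫₀¹ T = a 0 > c * ε * |log ε|⁻¹`. -/
theorem nonneg_trig_poly_mean_lower_bound :
    ∃ c : ℝ, 0 < c ∧
      ∀ ε : ℝ, 0 < ε → ε < 1 / 4 →
        ∀ n : ℕ → ℕ, (∀ j, 1 ≤ j → 0 < n j) →
          (∀ j, 1 ≤ j → (1 + ε) * (n j : ℝ) ≤ (n (j + 1) : ℝ)) →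
          ∀ N : ℕ, 1 ≤ N → ∀ a : ℕ → ℝ,
            (∀ x : ℝ,
              0 ≤ a 0 + ∑ j ∈ Finset.Icc 1 N, a j * Real.cos (2 * Real.pi * n j * x)) →
            (a 0 + ∑ j ∈ Finset.Icc 1 N, a j * Real.cos (2 * Real.pi * n j * 0) = 1) →
            c * ε * |Real.log ε|⁻¹ < a 0 := by
  refine ⟨1/8, by norm_num, ?_⟩
  intro ε hε0 hε n hpos hlac N hN a hT hT1
  -- set up m
  have hε1 : (1:ℝ) < 1 + ε := by linarith
  have hlog1pos : 0 < Real.log (1 + ε) := Real.log_pos hε1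
  have h2ε : (1:ℝ) < 2 / ε := by
    rw [lt_div_iff₀ hε0]; linarith
  have hlog2pos : 0 < Real.log (2 / ε) := Real.log_pos h2ε
  set m : ℕ := ⌈Real.log (2 / ε) / Real.log (1 + ε)⌉₊ with hmdef
  have hm0 : 0 < m := by
    rw [hmdef]
    exact Nat.ceil_pos.mpr (by positivity)
  have hmge : Real.log (2 / ε) / Real.log (1 + ε) ≤ (m : ℝ) := Nat.le_ceil _
  have hmceil : (m:ℝ) < Real.log (2 / ε) / Real.log (1 + ε) + 1 := by
    rw [hmdef]
    exact Nat.ceil_lt_add_one (by positivity)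
  clear_value m
  have hpow : 2 / ε ≤ (1 + ε) ^ m := by
    have h1 : Real.log (2 / ε) ≤ m * Real.log (1 + ε) := by
      rw [div_le_iff₀ hlog1pos] at hmge
      linarith
    have h2 : Real.log (2 / ε) ≤ Real.log ((1 + ε) ^ m) := by
      rw [Real.log_pow]
      exact_mod_cast h1
    have h3 : (0:ℝ) < 2 / ε := by positivity
    have h4 : (0:ℝ) < (1 + ε) ^ m := by positivity
    exact (Real.log_le_log_iff h3 h4).mp h2
  -- pairwise property of fibers
  have hpair : ∀ r : ℕ, ∀ i ∈ (Finset.Icc 1 N).filter (fun j => j % m = r),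
      ∀ j ∈ (Finset.Icc 1 N).filter (fun j => j % m = r), i < j →
        2 * (n i : ℝ) ≤ ε * n j := by
    intro r i hi j hj hij
    have hi' := Finset.mem_filter.mp hi
    have hj' := Finset.mem_filter.mp hj
    have hi1 : 1 ≤ i := (Finset.mem_Icc.mp hi'.1).1
    have hdvd : m ∣ j - i := (Nat.modEq_iff_dvd' (le_of_lt hij)).mp
      (hi'.2.trans hj'.2.symm)
    have hge : m ≤ j - i := Nat.le_of_dvd (by omega) hdvd
    have him : i + m ≤ j := by omega
    have h1 : (1 + ε) ^ m * (n i : ℝ) ≤ n (i + m) :=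
      NTP2.lac_pow hε0 hpos hlac i m hi1
    have h2 : (n (i + m) : ℝ) ≤ n j :=
      NTP2.lac_mono hε0 hpos hlac (i + m) j (by omega) him
    have h3 : (0:ℝ) ≤ n i := Nat.cast_nonneg _
    have h4 : 2 / ε * (n i : ℝ) ≤ (1 + ε) ^ m * n i := by nlinarith
    have h5 : 2 / ε * (n i : ℝ) ≤ n j := by linarith
    rw [div_mul_eq_mul_div, div_le_iff₀ hε0] at h5
    nlinarith [h5]
  -- key inequality for each fiber, summed
  have hkey : ∀ r ∈ Finset.range m,
      (1/2) * ∑ j ∈ (Finset.Icc 1 N).filter (fun j => j % m = r), a j ≤ a 0 := by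
    intro r _
    exact NTP2.key_ineq hε0 hε hpos hlac a hT _ (Finset.filter_subset _ _) (hpair r)
  have hsplit : ∑ r ∈ Finset.range m, ∑ j ∈ (Finset.Icc 1 N).filter (fun j => j % m = r), a j
      = ∑ j ∈ Finset.Icc 1 N, a j :=
    Finset.sum_fiberwise_of_maps_to (fun j _ => Finset.mem_range.mpr (Nat.mod_lt j hm0)) a
  have hsumkey : (1/2) * ∑ j ∈ Finset.Icc 1 N, a j ≤ (m : ℝ) * a 0 := by
    have h1 := Finset.sum_le_sum hkey
    rw [Finset.sum_const, Finset.card_range, nsmul_eq_mul] at h1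
    rw [← hsplit, Finset.mul_sum]
    exact h1
  -- T(0) = 1
  have hT0 : ∑ j ∈ Finset.Icc 1 N, a j = 1 - a 0 := by
    have := hT1
    simp only [mul_zero, Real.cos_zero, mul_one] at this
    linarith
  have hmain : 1 ≤ a 0 * (2 * (m:ℝ) + 1) := by
    rw [hT0] at hsumkey
    nlinarith
  -- numerics
  have hlogεneg : Real.log ε < 0 := Real.log_neg hε0 (by linarith)
  set L : ℝ := -Real.log ε with hLdef
  have hLabs : |Real.log ε| = L := abs_of_neg hlogεneg
  have hlog2 : (0.6931471803 : ℝ) < Real.log 2 := Real.log_two_gt_d9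
  have hL2 : 2 * Real.log 2 ≤ L := by
    have h1 : Real.log ε ≤ Real.log (1/4) := Real.log_le_log hε0 (le_of_lt hε)
    have h2 : Real.log (1/4 : ℝ) = -(2 * Real.log 2) := by
      rw [show (1/4 : ℝ) = ((2:ℝ)^2)⁻¹ by norm_num, Real.log_inv, Real.log_pow]
      push_cast
      ring
    rw [hLdef]
    rw [h2] at h1
    linarith
  have hLpos : 0 < L := by nlinarith
  have hinv : 1/(1+ε) ≤ 1 - (4/5)*ε := by
    rw [div_le_iff₀ (by linarith : (0:ℝ) < 1+ε)]
    nlinarith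
  have hlog1low : (4/5) * ε ≤ Real.log (1 + ε) := by
    have h1 := Real.log_le_sub_one_of_pos (show (0:ℝ) < (1+ε)⁻¹ by positivity)
    rw [Real.log_inv, inv_eq_one_div] at h1
    linarith
  have hlog2up : Real.log (2/ε) ≤ (3/2) * L := by
    rw [Real.log_div (by norm_num) (ne_of_gt hε0)]
    linarith [hL2, hLdef.le, hLdef.ge]
  have hmlt : (m : ℝ) < (15/8) * L / ε + 1 := by
    have h1 := hmceil
    have h2 : Real.log (2 / ε) / Real.log (1 + ε) ≤ (3/2)*L / ((4/5)*ε) :=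
      div_le_div₀ (by positivity) hlog2up (by positivity) hlog1low
    have h3 : (3/2)*L / ((4/5)*ε) = (15/8)*L/ε := by
      field_simp
      ring
    rw [h3] at h2
    exact h1.trans_le (add_le_add_left h2 1)
  have hεm : ε * (m:ℝ) < (15/8)*L + ε := by
    have h6 := mul_lt_mul_of_pos_left hmlt hε0
    have h7 : ε * ((15/8)*L/ε + 1) = (15/8)*L + ε := by
      field_simp
    rw [h7] at h6
    exact h6
  have h2m : ε * (2*(m:ℝ)+1) < 8 * L := by
    have hexp : ε*(2*(m:ℝ)+1) = 2*(ε*(m:ℝ)) + ε := by ring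
    rw [hexp]
    linarith [hεm, hL2, hlog2, hε]
  rw [hLabs]
  have hmpos : (0:ℝ) < 2*(m:ℝ)+1 := by positivity
  have ha0 : 1/(2*(m:ℝ)+1) ≤ a 0 := by
    rw [div_le_iff₀ hmpos]
    linarith [hmain]
  have hlt : 1/8 * ε * L⁻¹ < 1/(2*(m:ℝ)+1) := by
    rw [show (1:ℝ)/8 * ε * L⁻¹ = ε/(8*L) by field_simp]
    rw [div_lt_div_iff₀ (by positivity) hmpos]
    linarith [h2m]
  linarith [ha0, hlt]
end
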